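/- arXiv:2404.05650 — 7 statements merged into one kernel-verified Lean document; each statement's English description precedes it below -/
import Mathlib

section
/- For every e ∈ E, η*(e) > 0. -/
open Set Matroid

/-- The rank of a set in a matroid: the maximum cardinality of an independent subset. -/
noncomputable def Matroid.rk' {α : Type*} (M : Matroid α) (X : Set α) : ℕ :=
  sSup {n : ℕ | ∃ I, I ⊆ X ∧ M.Indep I ∧ n = Nat.card I}

/-- The set of indicator vectors of bases of a matroid, viewed as vectors in `ℝ^E`. -/
def Matroid.baseVecs {α : Type*} (M : Matroid α) : Set (α → ℝ) :=
  {f | ∃ B, M.IsBase B ∧ f = B.indicator 1}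

/-- A matroid is loopless if every singleton of the ground set is independent. -/
def Matroid.Loopless' {α : Type*} (M : Matroid α) : Prop := ∀ e ∈ M.E, M.Indep {e}

/-- For a loopless matroid of positive rank, the optimal usage probabilities
`η*` (the minimum-Euclidean-norm point of the convex hull of base indicator vectors)
are strictly positive at every element. -/
theorem etaStar_pos {α : Type*} [Fintype α] [Nonempty α]
    (M : Matroid α) (hE : M.E = Set.univ)
    (hloop : M.Loopless') (hrk : 0 < M.rk' M.E)
    (ηs : α → ℝ) (hmem : ηs ∈ convexHull ℝ M.baseVecs)
    (hmin : ∀ η ∈ convexHull ℝ M.baseVecs, ∑ e, ηs e ^ 2 ≤ ∑ e, η e ^ 2) :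
    ∀ e, 0 < ηs e := by
  classical
  intro e
  by_contra hneg
  push_neg at hneg
  rw [convexHull_eq] at hmem
  obtain ⟨ι, t, w, z, hw0, hw1, hz, hcm⟩ := hmem
  have hηs : ηs = ∑ i ∈ t, w i • z i := by
    rw [← hcm, Finset.centerMass_eq_of_sum_1 _ _ hw1]
  have hpt : ∀ x, ηs x = ∑ i ∈ t, w i * z i x := by
    intro x; rw [hηs]; simp [Finset.sum_apply]
  have hterm : ∀ i ∈ t, ∀ x, 0 ≤ w i * z i x := by
    intro i hi x
    obtain ⟨B, hB, hzi⟩ := hz i hi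
    rw [hzi]
    exact mul_nonneg (hw0 i hi) (Set.indicator_nonneg (fun _ _ => zero_le_one) x)
  have hnn : ∀ x, 0 ≤ ηs x := fun x => by
    rw [hpt x]; exact Finset.sum_nonneg fun i hi => hterm i hi x
  have he0 : ηs e = 0 := le_antisymm hneg (hnn e)
  have hex : ∃ i0 ∈ t, 0 < w i0 := by
    by_contra h; push_neg at h
    have : ∑ i ∈ t, w i = 0 :=
      Finset.sum_eq_zero fun i hi => le_antisymm (h i hi) (hw0 i hi)
    rw [hw1] at this; norm_num at this
  obtain ⟨i0, hi0, hwi0⟩ := hex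
  obtain ⟨B, hB, hzB⟩ := hz i0 hi0
  have hterm0 : ∀ i ∈ t, w i * z i e = 0 :=
    (Finset.sum_eq_zero_iff_of_nonneg (fun i hi => hterm i hi e)).mp (by rw [← hpt e, he0])
  have heB : e ∉ B := by
    intro heB
    have h0 := hterm0 i0 hi0
    rw [hzB, Set.indicator_of_mem heB, Pi.one_apply, mul_one] at h0
    exact hwi0.ne' h0
  have hee : M.Indep {e} := hloop e (by rw [hE]; trivial)
  obtain ⟨B', hB', heB'sub, hB'sub⟩ := hee.exists_isBase_subset_union_isBase hB
  have heB' : e ∈ B' := heB'sub rfl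
  have h1 : B' \ B = {e} := by
    apply Set.Subset.antisymm
    · rintro x ⟨hx1, hx2⟩
      rcases hB'sub hx1 with hx' | hx'
      · exact hx'
      · exact absurd hx' hx2
    · rintro x rfl
      exact ⟨heB', heB⟩
  have h2 : (B \ B').encard = 1 := by
    rw [hB.encard_diff_comm hB', h1, Set.encard_singleton]
  obtain ⟨f, hf⟩ := Set.encard_eq_one.mp h2
  have hfB : f ∈ B ∧ f ∉ B' := by
    have : f ∈ B \ B' := by rw [hf]; rfl
    exact ⟨this.1, this.2⟩
  have hfe : f ≠ e := fun h => heB (h ▸ hfB.1)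
  have hf_pos : 0 < ηs f := by
    have h1' : w i0 * z i0 f ≤ ηs f := by
      rw [hpt f]
      exact Finset.single_le_sum (fun i hi => hterm i hi f) hi0
    rw [hzB, Set.indicator_of_mem hfB.1, Pi.one_apply, mul_one] at h1'
    exact lt_of_lt_of_le hwi0 h1'
  set s : ℝ := min (w i0) (ηs f) / 2 with hs_def
  have hs_pos : 0 < s := by
    have : 0 < min (w i0) (ηs f) := lt_min hwi0 hf_pos
    positivity
  have hs_le : s ≤ w i0 := by
    have := min_le_left (w i0) (ηs f); rw [hs_def]; linarith
  have hs_lt : s < ηs f := by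
    have := min_le_right (w i0) (ηs f); rw [hs_def]; linarith
  set u : α → ℝ := B.indicator 1 with hu_def
  set v : α → ℝ := B'.indicator 1 with hv_def
  set σ : ℝ := s / w i0 with hσ_def
  have hσ0 : 0 ≤ σ := le_of_lt (div_pos hs_pos hwi0)
  have hσ1 : σ ≤ 1 := by
    rw [hσ_def, div_le_one hwi0]; exact hs_le
  have hws : w i0 * σ = s := by
    rw [hσ_def]; field_simp
  set z' : ι → (α → ℝ) := Function.update z i0 ((1 - σ) • u + σ • v) with hz'_def
  set η' : α → ℝ := ∑ i ∈ t, w i • z' i with hη'_def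
  have hη'mem : η' ∈ convexHull ℝ M.baseVecs := by
    have hconv := convex_convexHull ℝ M.baseVecs
    have hmemhull : ∀ i ∈ t, z' i ∈ convexHull ℝ M.baseVecs := by
      intro i hi
      rcases eq_or_ne i i0 with rfl | h
      · rw [hz'_def, Function.update_self]
        exact hconv (subset_convexHull ℝ _ ⟨B, hB, hu_def⟩)
          (subset_convexHull ℝ _ ⟨B', hB', hv_def⟩)
          (by linarith) hσ0 (by ring)
      · rw [hz'_def, Function.update_of_ne h]
        exact subset_convexHull ℝ _ (hz i hi)
    have hmm := hconv.centerMass_mem hw0 (by rw [hw1]; norm_num) hmemhull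
    rwa [Finset.centerMass_eq_of_sum_1 _ _ hw1] at hmm
  have hη'pt : ∀ x, η' x = ηs x + s * (v x - u x) := by
    intro x
    have hdiff : η' x - ηs x = ∑ i ∈ t, (w i * z' i x - w i * z i x) := by
      rw [hη'_def, hηs]
      simp [Finset.sum_apply, Finset.sum_sub_distrib]
    rw [Finset.sum_eq_single i0] at hdiff
    · rw [hz'_def, Function.update_self, hzB] at hdiff
      have : η' x - ηs x = w i0 * ((1 - σ) * u x + σ * v x) - w i0 * u x := by
        simpa using hdiff
      have h2 : η' x - ηs x = (w i0 * σ) * (v x - u x) := by rw [this]; ring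
      rw [hws] at h2; linarith
    · intro i hi hne
      rw [hz'_def, Function.update_of_ne hne]; ring
    · intro h; exact absurd hi0 h
  have hvu : ∀ x, x ≠ e → x ≠ f → v x = u x := by
    intro x hxe hxf
    by_cases hx : x ∈ B'
    · rcases hB'sub hx with hx' | hx'
      · exact absurd hx' hxe
      · rw [hv_def, hu_def, Set.indicator_of_mem hx, Set.indicator_of_mem hx']
    · have hxB : x ∉ B := by
        intro hxB
        have : x ∈ B \ B' := ⟨hxB, hx⟩
        rw [hf] at this
        exact hxf this
      rw [hv_def, hu_def, Set.indicator_of_notMem hx, Set.indicator_of_notMem hxB]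
  have hη'e : η' e = s := by
    rw [hη'pt e, he0, hu_def, hv_def, Set.indicator_of_mem heB', Set.indicator_of_notMem heB]
    simp
  have hη'f : η' f = ηs f - s := by
    rw [hη'pt f, hu_def, hv_def, Set.indicator_of_notMem hfB.2, Set.indicator_of_mem hfB.1]
    simp; ring
  have hη'x : ∀ x, x ≠ e → x ≠ f → η' x = ηs x := by
    intro x hxe hxf
    rw [hη'pt x, hvu x hxe hxf]; ring
  have hlt : ∑ x, η' x ^ 2 < ∑ x, ηs x ^ 2 := by
    have hkey : ∑ x, η' x ^ 2 - ∑ x, ηs x ^ 2 = ∑ x, (η' x ^ 2 - ηs x ^ 2) := by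
      rw [Finset.sum_sub_distrib]
    have hef : ({e, f} : Finset α) ⊆ Finset.univ := Finset.subset_univ _
    have hzero : ∀ x ∈ Finset.univ, x ∉ ({e, f} : Finset α) →
        η' x ^ 2 - ηs x ^ 2 = 0 := by
      intro x _ hx
      simp only [Finset.mem_insert, Finset.mem_singleton] at hx
      push_neg at hx
      rw [hη'x x hx.1 hx.2]; ring
    have hsum2 : ∑ x ∈ ({e, f} : Finset α), (η' x ^ 2 - ηs x ^ 2) =
        ∑ x, (η' x ^ 2 - ηs x ^ 2) := Finset.sum_subset hef hzero
    rw [← hkey] at hsum2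
    rw [Finset.sum_pair (Ne.symm hfe)] at hsum2
    rw [hη'e, hη'f, he0] at hsum2
    nlinarith [hsum2, hs_pos, hs_lt]
  exact absurd (hmin η' hη'mem) (not_le.mpr hlt)
end

section
/- Let B be a fair base of M, let x ∈ E − B, and let C be a circuit of M with x ∈ C ⊆ B ∪ {x} (such a circuit exists and is unique). Then η*(x) = max_{e∈C} η*(e). -/
open Set Matroid

/-- A circuit is a minimal dependent subset of the ground set. -/
def Matroid.Circuit' {α : Type*} (M : Matroid α) (C : Set α) : Prop :=
  C ⊆ M.E ∧ ¬ M.Indep C ∧ ∀ D, D ⊂ C → M.Indep D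

/-- A fair base: a base receiving positive mass from some probability mass function on
the bases whose element usage probabilities are `η`. -/
def Matroid.FairBase {α : Type*} [Fintype α] (M : Matroid α) (η : α → ℝ) (B : Set α) : Prop :=
  M.IsBase B ∧ ∃ μ : Set α → ℝ, (∀ A, 0 ≤ μ A) ∧ (∀ A, ¬ M.IsBase A → μ A = 0) ∧
    (∑ A : Set α, μ A) = 1 ∧ (∀ e, (∑ A : Set α, A.indicator (fun _ ↦ μ A) e) = η e) ∧
    0 < μ B

/-- Exchange along a fundamental circuit yields a base. -/
theorem aux_exch {α : Type*} [Fintype α] (M : Matroid α) (hE : M.E = Set.univ)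
    {B : Set α} (hB : M.IsBase B) {x : α} (hx : x ∉ B)
    {C : Set α} (hC : M.Circuit' C) (hCB : C ⊆ B ∪ {x})
    {e : α} (heC : e ∈ C) (hex : e ≠ x) :
    M.IsBase (insert x (B \ {e})) := by
  have heB : e ∈ B := by
    rcases hCB heC with h | h
    · exact h
    · exact absurd h hex
  set X : Set α := insert x (B \ {e}) with hX
  have hXE : X ⊆ M.E := by rw [hE]; exact subset_univ _
  have hCe : M.Indep (C \ {e}) := hC.2.2 _ (sdiff_singleton_ssubset.2 heC)
  have hCeX : C \ {e} ⊆ X := by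
    intro a ha
    rcases hCB ha.1 with h | h
    · exact Or.inr ⟨h, ha.2⟩
    · exact Or.inl h
  obtain ⟨J, hJ, hCJ⟩ := hCe.subset_isBasis_of_subset hCeX hXE
  have h1 : ¬ J.encard < B.encard := by
    intro hlt
    obtain ⟨y, hy, hyJ⟩ := hJ.indep.augment hB.indep hlt
    have hye : y ≠ e := by
      rintro rfl
      apply hC.2.1
      refine hyJ.subset ?_
      intro a ha
      by_cases h : a = y
      · exact h ▸ mem_insert _ _
      · exact Or.inr (hCJ ⟨ha, h⟩)
    have hyX : y ∈ X := Or.inr ⟨hy.1, hye⟩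
    exact hy.2 (hJ.mem_of_insert_indep hyX hyJ)
  have h2 : ¬ B.encard < J.encard := by
    intro hlt
    obtain ⟨y, hy, hyB⟩ := hB.indep.augment hJ.indep hlt
    exact hy.2 (hB.mem_of_insert_indep hyB)
  have hcard : J.encard = B.encard := le_antisymm (not_lt.1 h2) (not_lt.1 h1)
  have hXcard : X.encard = B.encard := by
    rw [hX, Set.encard_insert_of_notMem (fun h => hx h.1),
      Set.encard_diff_singleton_add_one heB]
  have hJX : J = X := by
    refine (Set.toFinite J).eq_of_subset_of_encard_le hJ.subset ?_
    rw [hXcard, hcard]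
  have hXi : M.Indep X := hJX ▸ hJ.indep
  exact hB.exchange_isBase_of_indep hx hXi

/-- Moving mass `t` from base `B` to base `B'` keeps the usage vector in the hull. -/
theorem aux_pert_mem {α : Type*} [Fintype α] (M : Matroid α)
    (ηs : α → ℝ) {B B' : Set α} (hB : M.IsBase B) (hB' : M.IsBase B') (hne : B' ≠ B)
    (μ : Set α → ℝ) (hμ0 : ∀ A, 0 ≤ μ A) (hμb : ∀ A, ¬ M.IsBase A → μ A = 0)
    (hμ1 : (∑ A : Set α, μ A) = 1)
    (hμη : ∀ e, (∑ A : Set α, A.indicator (fun _ ↦ μ A) e) = ηs e)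
    {t : ℝ} (ht0 : 0 < t) (htB : t ≤ μ B) :
    (fun f => ηs f + t * (B'.indicator 1 f - B.indicator 1 f)) ∈ convexHull ℝ M.baseVecs := by
  classical
  set μ' : Set α → ℝ := fun A => μ A + (if A = B' then t else 0) - (if A = B then t else 0)
    with hμ'
  have hne' : B ≠ B' := fun h => hne h.symm
  set s : Finset (Set α) := Finset.univ.filter (fun A => M.IsBase A) with hs
  have hμ'0 : ∀ A, 0 ≤ μ' A := by
    intro A
    simp only [hμ']
    by_cases h1 : A = B'
    · subst h1
      rw [if_pos rfl, if_neg hne]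
      have := hμ0 A; linarith
    · by_cases h2 : A = B
      · subst h2
        rw [if_neg hne', if_pos rfl]
        linarith
      · simp [h1, h2, hμ0 A]
  have hzero : ∀ A ∈ Finset.univ, A ∉ s → μ' A = 0 := by
    intro A _ hA
    simp only [hs, Finset.mem_filter, Finset.mem_univ, true_and] at hA
    have h1 : A ≠ B' := fun h => hA (h ▸ hB')
    have h2 : A ≠ B := fun h => hA (h ▸ hB)
    simp [hμ', h1, h2, hμb A hA]
  have hsum : ∑ A ∈ s, μ' A = 1 := by
    rw [Finset.sum_subset (Finset.subset_univ s) hzero]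
    simp only [hμ']
    rw [Finset.sum_sub_distrib, Finset.sum_add_distrib, hμ1]
    simp [hne]
  have := Finset.centerMass_mem_convexHull (t := s) (w := μ') (s := M.baseVecs)
    (z := fun A => (A.indicator 1 : α → ℝ))
    (fun A _ => hμ'0 A) (by rw [hsum]; norm_num)
    (fun A hA => ⟨A, (Finset.mem_filter.1 hA).2, rfl⟩)
  rw [Finset.centerMass_eq_of_sum_1 _ _ hsum] at this
  convert this using 1
  funext f
  rw [Finset.sum_apply]
  have hind : ∀ A : Set α, A.indicator (fun _ ↦ μ A) f = μ A * A.indicator 1 f := by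
    intro A; by_cases h : f ∈ A <;> simp [Set.indicator, h]
  have key : ∑ A ∈ s, μ' A * A.indicator 1 f
      = ηs f + t * (B'.indicator 1 f - B.indicator 1 f) := by
    rw [Finset.sum_subset (Finset.subset_univ s)
      (fun A h1 h2 => by rw [hzero A h1 h2, zero_mul])]
    simp only [hμ', sub_mul, add_mul, ite_mul, zero_mul]
    rw [Finset.sum_sub_distrib, Finset.sum_add_distrib,
      Finset.sum_ite_eq' Finset.univ B' (fun A => t * (A.indicator 1 f)),
      Finset.sum_ite_eq' Finset.univ B (fun A => t * (A.indicator 1 f))]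
    simp only [Finset.mem_univ, if_true]
    have := hμη f
    simp only [hind] at this
    rw [this]; ring
  rw [← key]
  apply Finset.sum_congr rfl
  intro A _
  simp [Pi.smul_apply, smul_eq_mul]

/-- If `B` is a fair base, `x ∈ E − B`, and `C` is the circuit with `x ∈ C ⊆ B ∪ {x}`,
then `η*(x) = max_{e ∈ C} η*(e)`. -/
theorem etaStar_eq_max_on_fundamental_circuit {α : Type*} [Fintype α] [Nonempty α]
    (M : Matroid α) (hE : M.E = Set.univ)
    (hloop : M.Loopless') (hrk : 0 < M.rk' M.E)
    (ηs : α → ℝ) (hmem : ηs ∈ convexHull ℝ M.baseVecs)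
    (hmin : ∀ η ∈ convexHull ℝ M.baseVecs, ∑ e, ηs e ^ 2 ≤ ∑ e, η e ^ 2)
    (B : Set α) (hB : M.FairBase ηs B)
    (x : α) (hx : x ∉ B)
    (C : Set α) (hC : M.Circuit' C) (hxC : x ∈ C) (hCB : C ⊆ B ∪ {x}) :
    IsGreatest (ηs '' C) (ηs x) := by
  classical
  constructor
  · exact ⟨x, hxC, rfl⟩
  rintro y ⟨e, heC, rfl⟩
  by_cases hex : e = x
  · subst hex; exact le_refl _
  by_contra hlt
  push_neg at hlt
  obtain ⟨hBb, μ, hμ0, hμb, hμ1, hμη, hμB⟩ := hB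
  have hB' : M.IsBase (insert x (B \ {e})) := aux_exch M hE hBb hx hC hCB heC hex
  have heB : e ∈ B := by
    rcases hCB heC with h | h
    · exact h
    · exact absurd h hex
  have hne : insert x (B \ {e}) ≠ B := fun h => hx (h ▸ mem_insert x _)
  set B' : Set α := insert x (B \ {e}) with hB'def
  set t : ℝ := min (μ B) ((ηs e - ηs x) / 2) with ht
  have ht0 : 0 < t := lt_min hμB (by linarith)
  have htB : t ≤ μ B := min_le_left _ _
  have ht2 : t ≤ (ηs e - ηs x) / 2 := min_le_right _ _
  have hz := aux_pert_mem M ηs hBb hB' hne μ hμ0 hμb hμ1 hμη ht0 htB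
  have hge := hmin _ hz
  set z : α → ℝ := fun f => ηs f + t * (B'.indicator 1 f - B.indicator 1 f) with hzdef
  have hxe : x ≠ e := fun h => hex h.symm
  have hzx : z x = ηs x + t := by
    simp only [hzdef]
    rw [Set.indicator_of_mem (mem_insert x _) (1 : α → ℝ),
      Set.indicator_of_notMem hx (1 : α → ℝ)]
    simp
  have hze : z e = ηs e - t := by
    have heB' : e ∉ B' := by
      intro h
      rcases h with h | h
      · exact hex h
      · exact h.2 rfl
    simp only [hzdef]
    rw [Set.indicator_of_notMem heB' (1 : α → ℝ),
      Set.indicator_of_mem heB (1 : α → ℝ)]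
    simp; ring
  have hzf : ∀ f, f ≠ x → f ≠ e → z f = ηs f := by
    intro f hfx hfe
    have : B'.indicator (1 : α → ℝ) f = B.indicator 1 f := by
      by_cases h : f ∈ B
      · have hfB' : f ∈ B' := Set.mem_insert_of_mem _ ⟨h, hfe⟩
        rw [Set.indicator_of_mem hfB' (1 : α → ℝ),
          Set.indicator_of_mem h (1 : α → ℝ)]
      · have : f ∉ B' := by
          intro hf
          rcases hf with hf | hf
          · exact hfx hf
          · exact h hf.1
        rw [Set.indicator_of_notMem this (1 : α → ℝ),
          Set.indicator_of_notMem h (1 : α → ℝ)]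
    simp only [hzdef, this]; ring
  have hdiff : ∑ f, (z f ^ 2 - ηs f ^ 2) = 2 * t * (ηs x - ηs e + t) := by
    have hsub : ({x, e} : Finset α) ⊆ Finset.univ := Finset.subset_univ _
    rw [← Finset.sum_subset hsub (fun f _ hf => by
      rw [Finset.mem_insert, Finset.mem_singleton] at hf
      push_neg at hf
      rw [hzf f hf.1 hf.2]; ring)]
    rw [Finset.sum_pair hxe, hzx, hze]
    ring
  have hnn : 0 ≤ 2 * t * (ηs x - ηs e + t) := by
    rw [← hdiff, Finset.sum_sub_distrib]
    have : ∑ f, ηs f ^ 2 ≤ ∑ f, z f ^ 2 := hge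
    linarith
  nlinarith [mul_pos ht0 ht0]
end

section
/- For every subset X ⊆ E, η*(X) ≥ r(E) − r(E−X); moreover equality holds if and only if every fair base B of M satisfies |B − X| = r(E−X). -/
open Set Matroid

section Aux

variable {α : Type*} [Fintype α]

private lemma natCard_le_fintype (S : Set α) : Nat.card S ≤ Fintype.card α := by
  rw [Nat.card_coe_set_eq]
  have := Set.ncard_le_ncard (Set.subset_univ S) Set.finite_univ
  simpa [Set.ncard_univ, Nat.card_eq_fintype_card] using this

private lemma rk'_le_of_indep {M : Matroid α} {X I : Set α} (hIX : I ⊆ X) (hI : M.Indep I) :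
    Nat.card I ≤ M.rk' X :=
  le_csSup ⟨Fintype.card α, by rintro n ⟨J, hJX, hJ, rfl⟩; exact natCard_le_fintype J⟩
    ⟨I, hIX, hI, rfl⟩

private lemma rk'_exists (M : Matroid α) (X : Set α) :
    ∃ I, I ⊆ X ∧ M.Indep I ∧ Nat.card I = M.rk' X := by
  have h := Nat.sSup_mem (s := {n : ℕ | ∃ I, I ⊆ X ∧ M.Indep I ∧ n = Nat.card I})
    ⟨0, ∅, Set.empty_subset X, M.empty_indep, by simp⟩
    ⟨Fintype.card α, by rintro n ⟨J, hJX, hJ, rfl⟩; exact natCard_le_fintype J⟩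
  obtain ⟨I, h1, h2, h3⟩ := h
  exact ⟨I, h1, h2, h3.symm⟩

private lemma base_natCard {M : Matroid α} {B : Set α} (hB : M.IsBase B) :
    Nat.card B = M.rk' M.E := by
  refine le_antisymm (rk'_le_of_indep hB.subset_ground hB.indep) ?_
  obtain ⟨I, hIE, hI, hcard⟩ := rk'_exists M M.E
  obtain ⟨B', hB', hIB'⟩ := hI.exists_isBase_superset
  have h1 : Nat.card I ≤ Nat.card B' := by
    rw [Nat.card_coe_set_eq, Nat.card_coe_set_eq]
    exact Set.ncard_le_ncard hIB' B'.toFinite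
  have h2 : Nat.card B' = Nat.card B := by
    rw [Nat.card_coe_set_eq, Nat.card_coe_set_eq]
    exact hB'.ncard_eq_ncard_of_isBase hB
  omega

private lemma sum_indicator_const (S : Set α) (c : ℝ) :
    ∑ e, S.indicator (fun _ => c) e = c * (Nat.card S : ℝ) := by
  classical
  have h1 : ∀ e, S.indicator (fun _ => c) e = if e ∈ S then c else 0 := fun e =>
    Set.indicator_apply _ _ _
  rw [Finset.sum_congr rfl fun e _ => h1 e, ← Finset.sum_filter, Finset.sum_const,
    nsmul_eq_mul, mul_comm]
  congr 2
  rw [Nat.card_coe_set_eq, Set.ncard_eq_toFinset_card']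
  congr 1
  ext e
  simp

private lemma base_split {M : Matroid α} {B : Set α} (X : Set α) (hB : M.IsBase B) :
    Nat.card (B ∩ X : Set α) + Nat.card (B \ X : Set α) = M.rk' M.E ∧
    Nat.card (B \ X : Set α) ≤ M.rk' (M.E \ X) := by
  have hsplit : Nat.card (B ∩ X : Set α) + Nat.card (B \ X : Set α) = Nat.card B := by
    simp only [Nat.card_coe_set_eq]
    exact Set.ncard_inter_add_ncard_diff_eq_ncard B X B.toFinite
  have hdiff : Nat.card (B \ X : Set α) ≤ M.rk' (M.E \ X) :=
    rk'_le_of_indep (Set.diff_subset_diff_left hB.subset_ground)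
      (hB.indep.subset Set.diff_subset)
  have := base_natCard hB
  exact ⟨by omega, hdiff⟩

private lemma exists_mu (M : Matroid α) (ηs : α → ℝ) (hmem : ηs ∈ convexHull ℝ M.baseVecs) :
    ∃ μ : Set α → ℝ, (∀ A, 0 ≤ μ A) ∧ (∀ A, ¬ M.IsBase A → μ A = 0) ∧
      (∑ A : Set α, μ A) = 1 ∧ (∀ e, (∑ A : Set α, A.indicator (fun _ ↦ μ A) e) = ηs e) := by
  classical
  set t : Finset (α → ℝ) :=
    (Finset.univ.filter M.IsBase).image (fun B : Set α => B.indicator 1) with ht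
  have hinj : Function.Injective (fun B : Set α => B.indicator (1 : α → ℝ)) := by
    intro A A' h
    ext e
    have h' := congrFun h e
    by_cases hA : e ∈ A <;> by_cases hA' : e ∈ A' <;>
      simp [Set.indicator_apply, hA, hA'] at h' ⊢ <;> tauto
  have hbv : M.baseVecs = ↑t := by
    ext f
    constructor
    · rintro ⟨B, hB, rfl⟩
      exact Finset.mem_coe.2
        (Finset.mem_image.2 ⟨B, Finset.mem_filter.2 ⟨Finset.mem_univ _, hB⟩, rfl⟩)
    · intro hf
      obtain ⟨B, hB, rfl⟩ := Finset.mem_image.1 (Finset.mem_coe.1 hf)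
      exact ⟨B, (Finset.mem_filter.1 hB).2, rfl⟩
  rw [hbv, Finset.convexHull_eq] at hmem
  obtain ⟨w, hw0, hw1, hwc⟩ := hmem
  have hηs : ηs = ∑ f ∈ t, w f • f := by
    rw [← hwc, Finset.centerMass_eq_of_sum_1 _ _ hw1]
    simp
  refine ⟨fun A => if M.IsBase A then w (A.indicator 1) else 0, fun A => ?_,
    fun A hA => by simp [hA], ?_, fun e => ?_⟩
  · show 0 ≤ if M.IsBase A then w (A.indicator 1) else 0
    split_ifs with hA
    · exact hw0 _ (Finset.mem_image.2 ⟨A, Finset.mem_filter.2 ⟨Finset.mem_univ _, hA⟩, rfl⟩)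
    · exact le_refl 0
  · show ∑ A : Set α, (if M.IsBase A then w (A.indicator 1) else 0) = 1
    calc ∑ A : Set α, (if M.IsBase A then w (A.indicator 1) else 0)
        = ∑ A ∈ Finset.univ.filter M.IsBase, w (A.indicator 1) :=
          (Finset.sum_filter _ _).symm
      _ = ∑ f ∈ t, w f := (Finset.sum_image (fun A _ A' _ h => hinj h)).symm
      _ = 1 := hw1
  · show ∑ A : Set α, A.indicator
        (fun _ => if M.IsBase A then w (A.indicator 1) else 0) e = ηs e
    have h1 : ∀ A : Set α, A.indicator
        (fun _ => if M.IsBase A then w (A.indicator 1) else 0) e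
        = if M.IsBase A then w (A.indicator 1) * (A.indicator (1 : α → ℝ) e) else 0 := by
      intro A
      by_cases hA : M.IsBase A <;> by_cases he : e ∈ A <;>
        simp [Set.indicator_apply, hA, he]
    calc ∑ A : Set α, A.indicator
          (fun _ => if M.IsBase A then w (A.indicator 1) else 0) e
        = ∑ A : Set α, if M.IsBase A then w (A.indicator 1) * (A.indicator (1 : α → ℝ) e)
            else 0 := Finset.sum_congr rfl fun A _ => h1 A
      _ = ∑ A ∈ Finset.univ.filter M.IsBase, w (A.indicator 1) * (A.indicator (1 : α → ℝ) e) :=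
          (Finset.sum_filter _ _).symm
      _ = ∑ f ∈ t, w f * f e := by
          rw [ht, Finset.sum_image (fun A _ A' _ h => hinj h)]
      _ = ηs e := by
          have := congrFun hηs e
          rw [this, Finset.sum_apply]
          simp

end Aux

/-- For every `X ⊆ E`, `η*(X) ≥ r(E) − r(E−X)`, with equality iff every fair base `B`
satisfies `|B − X| = r(E−X)`. -/
theorem etaStar_set_lower_bound {α : Type*} [Fintype α] [Nonempty α]
    (M : Matroid α) (hE : M.E = Set.univ)
    (hloop : M.Loopless') (hrk : 0 < M.rk' M.E)
    (ηs : α → ℝ) (hmem : ηs ∈ convexHull ℝ M.baseVecs)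
    (hmin : ∀ η ∈ convexHull ℝ M.baseVecs, ∑ e, ηs e ^ 2 ≤ ∑ e, η e ^ 2)
    (X : Set α) (hX : X ⊆ M.E) :
    ((M.rk' M.E : ℝ) - (M.rk' (M.E \ X) : ℝ) ≤ ∑ e, X.indicator ηs e) ∧
    (∑ e, X.indicator ηs e = (M.rk' M.E : ℝ) - (M.rk' (M.E \ X) : ℝ) ↔
      ∀ B, M.FairBase ηs B → Nat.card (B \ X : Set α) = M.rk' (M.E \ X)) := by
  classical
  set r : ℕ := M.rk' M.E with hr
  set r' : ℕ := M.rk' (M.E \ X) with hr'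
  -- expansion of ηs(X) for any representing pmf
  have hexp : ∀ ν : Set α → ℝ,
      (∀ e, (∑ A : Set α, A.indicator (fun _ ↦ ν A) e) = ηs e) →
      ∑ e, X.indicator ηs e = ∑ A : Set α, ν A * (Nat.card (A ∩ X : Set α) : ℝ) := by
    intro ν hνe
    have h1 : ∀ e, X.indicator ηs e = ∑ A : Set α, (A ∩ X).indicator (fun _ => ν A) e := by
      intro e
      by_cases he : e ∈ X
      · rw [Set.indicator_of_mem he, ← hνe e]
        refine Finset.sum_congr rfl fun A _ => ?_
        by_cases hA : e ∈ A <;> simp [Set.indicator_apply, hA, he]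
      · rw [Set.indicator_of_notMem he]
        symm
        exact Finset.sum_eq_zero fun A _ => by simp [Set.indicator_apply, he]
    rw [Finset.sum_congr rfl fun e _ => h1 e, Finset.sum_comm]
    exact Finset.sum_congr rfl fun A _ => sum_indicator_const (A ∩ X) (ν A)
  -- termwise bound for any nonneg measure supported on bases
  have hbound : ∀ ν : Set α → ℝ, (∀ A, 0 ≤ ν A) → (∀ A, ¬ M.IsBase A → ν A = 0) →
      ∀ A : Set α, ν A * ((r : ℝ) - r') ≤ ν A * (Nat.card (A ∩ X : Set α) : ℝ) := by
    intro ν hν0 hνb A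
    rcases eq_or_lt_of_le (hν0 A) with h | h
    · rw [← h]; simp
    · have hA : M.IsBase A := by
        by_contra hc
        exact h.ne (hνb A hc).symm
      obtain ⟨hsp, hd⟩ := base_split (M := M) X hA
      have hle : (r : ℝ) ≤ (Nat.card (A ∩ X : Set α) : ℝ) + r' := by
        exact_mod_cast (by omega : r ≤ Nat.card (A ∩ X : Set α) + r')
      have : (r : ℝ) - r' ≤ (Nat.card (A ∩ X : Set α) : ℝ) := by linarith
      exact mul_le_mul_of_nonneg_left this h.le
  obtain ⟨μ, hμ0, hμb, hμ1, hμe⟩ := exists_mu M ηs hmem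
  have hlow : (r : ℝ) - r' ≤ ∑ e, X.indicator ηs e := by
    rw [hexp μ hμe]
    calc (r : ℝ) - r' = ∑ A : Set α, μ A * ((r : ℝ) - r') := by
          rw [← Finset.sum_mul, hμ1, one_mul]
      _ ≤ _ := Finset.sum_le_sum fun A _ => hbound μ hμ0 hμb A
  refine ⟨hlow, ?_, ?_⟩
  · -- equality → every fair base satisfies the card condition
    intro heq B hB
    obtain ⟨hBbase, ν, hν0, hνb, hν1, hνe, hνB⟩ := hB
    have hsum : ∑ A : Set α, ν A * ((r : ℝ) - r')
        = ∑ A : Set α, ν A * (Nat.card (A ∩ X : Set α) : ℝ) := by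
      rw [← hexp ν hνe, heq, ← Finset.sum_mul, hν1, one_mul]
    have hterm := (Finset.sum_eq_sum_iff_of_le
      (fun A _ => hbound ν hν0 hνb A)).1 hsum B (Finset.mem_univ B)
    have hcard : (Nat.card (B ∩ X : Set α) : ℝ) = (r : ℝ) - r' :=
      (mul_left_cancel₀ (ne_of_gt hνB) hterm).symm
    obtain ⟨hsp, hd⟩ := base_split (M := M) X hBbase
    have hsp' : (Nat.card (B ∩ X : Set α) : ℝ) + (Nat.card (B \ X : Set α) : ℝ) = (r : ℝ) := by
      exact_mod_cast hsp
    have : (Nat.card (B \ X : Set α) : ℝ) = (r' : ℝ) := by linarith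
    exact_mod_cast this
  · -- every fair base satisfies the condition → equality
    intro hfair
    rw [hexp μ hμe]
    have : ∀ A : Set α, μ A * (Nat.card (A ∩ X : Set α) : ℝ) = μ A * ((r : ℝ) - r') := by
      intro A
      rcases eq_or_lt_of_le (hμ0 A) with h | h
      · rw [← h]; simp
      · have hA : M.IsBase A := by
          by_contra hc
          exact h.ne (hμb A hc).symm
        have hAfair : M.FairBase ηs A := ⟨hA, μ, hμ0, hμb, hμ1, hμe, h⟩
        have hdiff := hfair A hAfair
        obtain ⟨hsp, _⟩ := base_split (M := M) X hA
        have hcard : (Nat.card (A ∩ X : Set α) : ℝ) = (r : ℝ) - r' := by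
          have hsp' : (Nat.card (A ∩ X : Set α) : ℝ) + (r' : ℝ) = (r : ℝ) := by
            exact_mod_cast hdiff ▸ hsp
          linarith
        rw [hcard]
    rw [Finset.sum_congr rfl fun A _ => this A, ← Finset.sum_mul, hμ1, one_mul]
end

section
/- If X ⊆ E is a Beurling set, then cl(E−X) = E−X, i.e. E−X is a closed set of M. -/
open Set Matroid

open scoped Classical

section Aux

variable {α : Type*} [Fintype α]

lemma bddAbove_rkset (M : Matroid α) (X : Set α) :
    BddAbove {n : ℕ | ∃ I, I ⊆ X ∧ M.Indep I ∧ n = Nat.card I} := by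
  refine ⟨Fintype.card α, ?_⟩
  rintro n ⟨J, hJX, hJ, rfl⟩
  rw [Nat.card_coe_set_eq]
  calc J.ncard ≤ (Set.univ : Set α).ncard := Set.ncard_le_ncard (Set.subset_univ J) Set.finite_univ
    _ = Fintype.card α := by simp [Set.ncard_univ, Nat.card_eq_fintype_card]

lemma ncard_le_rk' (M : Matroid α) {J X : Set α} (hJ : M.Indep J) (hJX : J ⊆ X) :
    J.ncard ≤ M.rk' X :=
  le_csSup (bddAbove_rkset M X) ⟨J, hJX, hJ, (Nat.card_coe_set_eq J).symm⟩

lemma rk'_eq_ncard_of_basis {M : Matroid α} {I X : Set α} (h : M.IsBasis I X) :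
    M.rk' X = I.ncard := by
  refine le_antisymm (csSup_le ⟨_, I, h.subset, h.indep, rfl⟩ ?_) (ncard_le_rk' M h.indep h.subset)
  rintro n ⟨J, hJX, hJ, rfl⟩
  obtain ⟨I', hI', hJI'⟩ := hJ.subset_isBasis_of_subset hJX h.subset_ground
  rw [Nat.card_coe_set_eq]
  calc J.ncard ≤ I'.ncard := Set.ncard_le_ncard hJI' I'.toFinite
    _ = I.ncard := by rw [Set.ncard_def, hI'.encard_eq_encard h, ← Set.ncard_def]

lemma sum_indicator_one (S : Set α) : ∑ e, S.indicator (1 : α → ℝ) e = S.ncard := by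
  rw [Finset.sum_indicator_eq_sum_filter]
  simp [Set.ncard_eq_toFinset_card', Set.toFinset]

lemma base_ineq {M : Matroid α} (hE : M.E = Set.univ) {B : Set α} (hB : M.IsBase B) (Y : Set α) :
    M.rk' M.E ≤ (B ∩ Y).ncard + M.rk' (M.E \ Y) := by
  have hBE : M.IsBasis B M.E := hB.isBasis_ground
  have h1 : M.rk' M.E = B.ncard := rk'_eq_ncard_of_basis hBE
  have h2 : (B \ Y).ncard ≤ M.rk' (M.E \ Y) :=
    ncard_le_rk' M (hB.indep.subset diff_subset)
      (diff_subset_diff_left (hB.subset_ground))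
  have h3 : (B ∩ Y).ncard + (B \ Y).ncard = B.ncard := by
    rw [Set.ncard_inter_add_ncard_diff_eq_ncard B Y B.toFinite]
  omega

lemma sum_indicator_eq (Y : Set α) (g : α → ℝ) :
    ∑ e, Y.indicator g e = ∑ e ∈ Y.toFinset, g e := by
  rw [Finset.sum_indicator_eq_sum_filter]
  congr 1; ext e; simp

lemma lower_bound (M : Matroid α) (hE : M.E = Set.univ) {η : α → ℝ}
    (hη : η ∈ convexHull ℝ M.baseVecs) (Y : Set α) :
    (M.rk' M.E : ℝ) - (M.rk' (M.E \ Y) : ℝ) ≤ ∑ e, Y.indicator η e := by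
  have hlin : IsLinearMap ℝ (fun g : α → ℝ => ∑ e ∈ Y.toFinset, g e) := by
    constructor
    · intro f g; simp [Finset.sum_add_distrib]
    · intro c f; simp [Finset.mul_sum]
  have hconv : Convex ℝ {f : α → ℝ | (M.rk' M.E : ℝ) - (M.rk' (M.E \ Y) : ℝ) ≤ ∑ e ∈ Y.toFinset, f e} :=
    convex_halfSpace_ge hlin _
  have hsub : M.baseVecs ⊆ {f : α → ℝ | (M.rk' M.E : ℝ) - (M.rk' (M.E \ Y) : ℝ) ≤ ∑ e ∈ Y.toFinset, f e} := by
    rintro _ ⟨B, hB, rfl⟩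
    simp only [Set.mem_setOf_eq, ← sum_indicator_eq, Set.indicator_indicator, sum_indicator_one]
    have h0 := base_ineq hE hB Y
    rw [Set.inter_comm] at h0
    have hcast : (M.rk' M.E : ℝ) ≤ ((Y ∩ B).ncard : ℝ) + (M.rk' (M.E \ Y) : ℝ) := by
      exact_mod_cast h0
    linarith
  have h := convexHull_min hsub hconv hη
  rw [sum_indicator_eq]; exact h

end Aux

/-- If `X ⊆ E` is a Beurling set (i.e. `η*(X) = r(E) − r(E−X)`), then `E − X` is closed:
`cl(E−X) = E−X`. -/
theorem closure_compl_eq_of_beurling {α : Type*} [Fintype α] [Nonempty α]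
    (M : Matroid α) (hE : M.E = Set.univ)
    (hloop : M.Loopless') (hrk : 0 < M.rk' M.E)
    (ηs : α → ℝ) (hmem : ηs ∈ convexHull ℝ M.baseVecs)
    (hmin : ∀ η ∈ convexHull ℝ M.baseVecs, ∑ e, ηs e ^ 2 ≤ ∑ e, η e ^ 2)
    (X : Set α) (hX : X ⊆ M.E)
    (hBeurling : ∑ e, X.indicator ηs e = (M.rk' M.E : ℝ) - (M.rk' (M.E \ X) : ℝ)) :
    M.closure (M.E \ X) = M.E \ X := by
  classical
  have hfinB : M.baseVecs.Finite := by
    have hsub : M.baseVecs ⊆ (fun B : Set α => B.indicator (1 : α → ℝ)) '' Set.univ := by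
      rintro _ ⟨B, hB, rfl⟩; exact ⟨B, trivial, rfl⟩
    exact ((Set.toFinite _).image _).subset hsub
  have hmem' := hmem
  rw [hfinB.convexHull_eq] at hmem
  obtain ⟨w, hw0, hw1, hcm⟩ := hmem
  set T := hfinB.toFinset with hT
  have hηs : ηs = ∑ z ∈ T, w z • z := by
    rw [← hcm, Finset.centerMass_eq_of_sum_1 _ id hw1]; simp
  have happly : ∀ e, ηs e = ∑ z ∈ T, w z * z e := by
    intro e; rw [hηs]; simp [Finset.sum_apply]
  have hz_nonneg : ∀ z ∈ T, ∀ e, (0 : ℝ) ≤ z e := by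
    intro z hz e
    rw [Set.Finite.mem_toFinset] at hz
    obtain ⟨B, hB, rfl⟩ := hz
    exact Set.indicator_nonneg (fun _ _ => by norm_num) e
  have hterm_nonneg : ∀ e, ∀ z ∈ T, (0 : ℝ) ≤ w z * z e := fun e z hz =>
    mul_nonneg (hw0 z (hfinB.mem_toFinset.1 hz)) (hz_nonneg z hz e)
  have hηs_nonneg : ∀ e, 0 ≤ ηs e := fun e => by
    rw [happly]; exact Finset.sum_nonneg (hterm_nonneg e)
  refine subset_antisymm ?_ (M.subset_closure _ diff_subset)
  intro y hy
  by_contra hyn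
  have hyE : y ∈ M.E := M.mem_ground_of_mem_closure hy
  have hyX : y ∈ X := by by_contra h; exact hyn ⟨hyE, h⟩
  obtain ⟨I, hI⟩ := M.exists_isBasis (M.E \ X) diff_subset
  have hycl : y ∈ M.closure I := by rw [hI.closure_eq_closure]; exact hy
  have hI' : M.IsBasis I (insert y (M.E \ X)) :=
    hI.indep.isBasis_of_subset_of_subset_closure (hI.subset.trans (Set.subset_insert _ _))
      (Set.insert_subset hycl hI.subset_closure)
  have hsetid : M.E \ (X \ {y}) = insert y (M.E \ X) := by
    rw [hE]; ext e
    simp only [Set.mem_diff, Set.mem_univ, true_and, Set.mem_insert_iff,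
      Set.mem_singleton_iff]
    tauto
  have hrkeq : M.rk' (M.E \ (X \ {y})) = M.rk' (M.E \ X) := by
    rw [hsetid, rk'_eq_ncard_of_basis hI', rk'_eq_ncard_of_basis hI]
  have hsplit : ∑ e, X.indicator ηs e = ∑ e, (X \ {y}).indicator ηs e + ηs y := by
    have hdecomp : (X \ {y}) ∪ {y} = X := by
      rw [Set.diff_union_self]
      exact Set.union_eq_self_of_subset_right (by simpa using hyX)
    have hdisj : Disjoint (X \ {y}) ({y} : Set α) := Set.disjoint_sdiff_left
    have hsingle : ∑ e, ({y} : Set α).indicator ηs e = ηs y := by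
      rw [Finset.sum_eq_single_of_mem y (Finset.mem_univ y)]
      · exact Set.indicator_of_mem rfl ηs
      · intro b _ hb
        exact Set.indicator_of_notMem (by simp [hb]) ηs
    have hpt : ∀ e, ((X \ {y}) ∪ {y}).indicator ηs e
        = (X \ {y}).indicator ηs e + ({y} : Set α).indicator ηs e := fun e => by
      by_cases hey : e = y
      · subst hey; simp [Set.indicator_apply, hyX]
      · simp [Set.indicator_apply, hey]
    calc ∑ e, X.indicator ηs e
        = ∑ e, ((X \ {y}) ∪ {y}).indicator ηs e := by rw [hdecomp]
      _ = ∑ e, ((X \ {y}).indicator ηs e + ({y} : Set α).indicator ηs e) :=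
          Finset.sum_congr rfl fun e _ => hpt e
      _ = ∑ e, (X \ {y}).indicator ηs e + ∑ e, ({y} : Set α).indicator ηs e :=
          Finset.sum_add_distrib
      _ = ∑ e, (X \ {y}).indicator ηs e + ηs y := by rw [hsingle]
  have hlb := lower_bound M hE hmem' (X \ {y})
  have hy0 : ηs y = 0 := by
    refine le_antisymm ?_ (hηs_nonneg y)
    rw [hrkeq] at hlb
    linarith [hBeurling, hsplit, hlb]
  -- perturbation argument
  obtain ⟨z₀, hz₀T, hwz₀⟩ : ∃ z ∈ T, 0 < w z := by
    by_contra h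
    push_neg at h
    have : ∑ z ∈ T, w z ≤ 0 := Finset.sum_nonpos h
    linarith
  obtain ⟨B₀, hB₀, hz₀eq⟩ := hfinB.mem_toFinset.1 hz₀T
  subst hz₀eq
  set z₀ : α → ℝ := B₀.indicator 1 with hz₀def
  have hyB₀ : y ∉ B₀ := by
    intro hyB₀
    have hzero := (Finset.sum_eq_zero_iff_of_nonneg (hterm_nonneg y)).1
      (by rw [← happly y, hy0]) _ hz₀T
    rw [hz₀def] at hzero
    simp [Set.indicator_of_mem hyB₀] at hzero
    exact absurd hzero (ne_of_gt hwz₀)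
  obtain ⟨B', hB', hyB', hB'sub⟩ := (hloop y hyE).exists_isBase_subset_union_isBase hB₀
  have hyB'' : y ∈ B' := hyB' rfl
  have hdiff1 : B' \ B₀ = {y} := by
    apply subset_antisymm
    · intro e he
      have := hB'sub he.1
      simp only [Set.mem_union, Set.mem_singleton_iff] at this
      rcases this with h | h
      · exact h ▸ rfl
      · exact absurd h he.2
    · exact Set.singleton_subset_iff.2 ⟨hyB'', hyB₀⟩
  have hdiff2 : ∃ f, B₀ \ B' = {f} := by
    rw [← Set.encard_eq_one, hB₀.encard_diff_comm hB', hdiff1, Set.encard_singleton]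
  obtain ⟨f, hfdiff⟩ := hdiff2
  have hfmem : f ∈ B₀ \ B' := by rw [hfdiff]; exact rfl
  have hfB₀ : f ∈ B₀ := hfmem.1
  have hfB' : f ∉ B' := hfmem.2
  have hyf : y ≠ f := fun h => hyB₀ (h ▸ hfB₀)
  set z' : α → ℝ := B'.indicator 1 with hz'def
  have hz'T : z' ∈ T := hfinB.mem_toFinset.2 ⟨_, hB', rfl⟩
  have hz'y : z' y = 1 := by rw [hz'def]; simp [hyB'']
  have hz₀y : z₀ y = 0 := by rw [hz₀def]; simp [hyB₀]
  have hz'f : z' f = 0 := by rw [hz'def]; simp [hfB']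
  have hz₀f : z₀ f = 1 := by rw [hz₀def]; simp [hfB₀]
  have hz'ne : z' ≠ z₀ := by
    intro h
    have h10 : (1 : ℝ) = 0 := by rw [← hz'y, h, hz₀y]
    exact one_ne_zero h10
  set ε := w z₀ / 2 with hεdef
  have hε : 0 < ε := by positivity
  set w' : (α → ℝ) → ℝ :=
    fun z => w z + (if z = z' then ε else 0) - (if z = z₀ then ε else 0) with hw'def
  have hw'0 : ∀ z ∈ T, 0 ≤ w' z := by
    intro z hz
    simp only [hw'def]
    have := hw0 z (hfinB.mem_toFinset.1 hz)
    split_ifs with h1 h2 h3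
    · exact absurd (h1 ▸ h2) hz'ne
    · linarith
    · subst h3; simp only [hεdef]; linarith
    · linarith
  have hw'sum : ∑ z ∈ T, w' z = 1 := by
    rw [hw'def]
    simp only [Finset.sum_sub_distrib, Finset.sum_add_distrib,
      Finset.sum_ite_eq' T z' (fun _ => ε), Finset.sum_ite_eq' T z₀ (fun _ => ε),
      hz'T, hz₀T, if_true, hw1]
    ring
  set η' : α → ℝ := ∑ z ∈ T, w' z • z with hη'def
  have hη'mem : η' ∈ convexHull ℝ M.baseVecs := by
    have h := Finset.centerMass_mem_convexHull T hw'0 (by rw [hw'sum]; norm_num)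
      (fun z hz => hfinB.mem_toFinset.1 hz)
    rwa [Finset.centerMass_eq_of_sum_1 _ _ hw'sum] at h
  have hη'eq : ∀ e, η' e = ηs e + ε * (z' e - z₀ e) := by
    intro e
    rw [hη'def, happly e, hw'def]
    simp only [Finset.sum_apply, Pi.smul_apply, smul_eq_mul, add_mul, sub_mul,
      Finset.sum_sub_distrib, Finset.sum_add_distrib, ite_mul, zero_mul,
      Finset.sum_ite_eq' T z' (fun z => ε * z e), Finset.sum_ite_eq' T z₀ (fun z => ε * z e),
      hz'T, hz₀T, if_true]
    ring
  have hηsf : 2 * ε ≤ ηs f := by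
    rw [happly f]
    have h := Finset.single_le_sum (hterm_nonneg f) hz₀T
    rw [hz₀f, mul_one] at h
    rw [hεdef]; linarith
  have hoff : ∀ e, e ≠ y → e ≠ f → η' e = ηs e := by
    intro e h1 h2
    rw [hη'eq e]
    have hiff : e ∈ B' ↔ e ∈ B₀ := by
      constructor
      · intro h
        have := hB'sub h
        simp only [Set.mem_union, Set.mem_singleton_iff] at this
        rcases this with h' | h'
        · exact absurd h' h1
        · exact h'
      · intro h
        by_contra hc
        have : e ∈ B₀ \ B' := ⟨h, hc⟩
        rw [hfdiff] at this
        exact h2 this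
    have : z' e = z₀ e := by
      rw [hz'def, hz₀def]
      simp [Set.indicator_apply, hiff]
    rw [this]; ring
  have hkey : ∑ e, η' e ^ 2 < ∑ e, ηs e ^ 2 := by
    have hfy : f ∈ Finset.univ.erase y := Finset.mem_erase.2 ⟨Ne.symm hyf, Finset.mem_univ f⟩
    have hsq : ∀ g : α → ℝ, ∑ e, g e ^ 2
        = g y ^ 2 + (g f ^ 2 + ∑ e ∈ (Finset.univ.erase y).erase f, g e ^ 2) := by
      intro g
      rw [← Finset.add_sum_erase _ _ (Finset.mem_univ y), ← Finset.add_sum_erase _ _ hfy]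
    rw [hsq η', hsq ηs]
    have hrest : ∑ e ∈ (Finset.univ.erase y).erase f, η' e ^ 2
        = ∑ e ∈ (Finset.univ.erase y).erase f, ηs e ^ 2 := by
      refine Finset.sum_congr rfl fun e he => ?_
      have he' := Finset.mem_erase.1 he
      have he'' := Finset.mem_erase.1 he'.2
      rw [hoff e he''.1 he'.1]
    rw [hrest]
    have hη'y : η' y = ε := by rw [hη'eq, hy0, hz'y, hz₀y]; ring
    have hη'f : η' f = ηs f - ε := by rw [hη'eq, hz'f, hz₀f]; ring
    rw [hη'y, hη'f, hy0]
    nlinarith [hηsf, hε]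
  exact absurd (hmin η' hη'mem) (not_le.2 hkey)
end

section
/- The following are equivalent: (i) η* is a constant vector; (ii) S(M) = |E|/r(E); (iii) D(M) = |E|/r(E); (iv) S(M) = D(M). -/
open Set Matroid

/-- The strength `S(M) = min{ |X| / (r(E) − r(E−X)) : X ⊆ E, r(E) > r(E−X) }`. -/
noncomputable def Matroid.strength {α : Type*} (M : Matroid α) : ℝ :=
  sInf {s : ℝ | ∃ X, X ⊆ M.E ∧ M.rk' (M.E \ X) < M.rk' M.E ∧
    s = (Nat.card X : ℝ) / ((M.rk' M.E : ℝ) - (M.rk' (M.E \ X) : ℝ))}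

/-- The fractional arboricity `D(M) = max{ |X| / r(X) : X ⊆ E, r(X) > 0 }`. -/
noncomputable def Matroid.arboricity {α : Type*} (M : Matroid α) : ℝ :=
  sSup {s : ℝ | ∃ X, X ⊆ M.E ∧ 0 < M.rk' X ∧ s = (Nat.card X : ℝ) / (M.rk' X : ℝ)}

set_option linter.unusedSectionVars false

section aux
variable {α : Type*} [Fintype α]

noncomputable def sfin (X : Set α) : Finset α := X.toFinite.toFinset

lemma mem_sfin {X : Set α} {e : α} : e ∈ sfin X ↔ e ∈ X := Set.Finite.mem_toFinset _

lemma card_sfin (X : Set α) : (sfin X).card = X.ncard :=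
  (Set.ncard_eq_toFinset_card X X.toFinite).symm

variable (M : Matroid α)

lemma rk'_bdd (X : Set α) : BddAbove {n : ℕ | ∃ I, I ⊆ X ∧ M.Indep I ∧ n = Nat.card I} := by
  refine ⟨Fintype.card α, ?_⟩
  rintro n ⟨I, -, -, rfl⟩
  rw [Nat.card_coe_set_eq]
  exact le_trans (Set.ncard_le_ncard (Set.subset_univ I) Set.finite_univ)
    (by rw [Set.ncard_univ, Nat.card_eq_fintype_card])

lemma ncard_le_rk'_s11 {I X : Set α} (hIX : I ⊆ X) (hI : M.Indep I) : I.ncard ≤ M.rk' X :=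
  le_csSup (rk'_bdd M X) ⟨I, hIX, hI, (Nat.card_coe_set_eq I).symm⟩

lemma exists_rk' (X : Set α) : ∃ I, I ⊆ X ∧ M.Indep I ∧ I.ncard = M.rk' X := by
  have h : M.rk' X ∈ {n : ℕ | ∃ I, I ⊆ X ∧ M.Indep I ∧ n = Nat.card I} :=
    Nat.sSup_mem ⟨0, ∅, Set.empty_subset X, M.empty_indep, by simp⟩ (rk'_bdd M X)
  obtain ⟨I, h1, h2, h3⟩ := h
  exact ⟨I, h1, h2, by rw [← Nat.card_coe_set_eq, ← h3]⟩

lemma rk'_empty : M.rk' (∅ : Set α) = 0 := by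
  have : {n : ℕ | ∃ I, I ⊆ (∅ : Set α) ∧ M.Indep I ∧ n = Nat.card I} = {0} := by
    ext n
    simp only [Set.mem_setOf_eq, Set.mem_singleton_iff]
    constructor
    · rintro ⟨I, hI, -, rfl⟩
      rw [Set.subset_empty_iff] at hI
      subst hI; simp
    · rintro rfl
      exact ⟨∅, Set.empty_subset _, M.empty_indep, by simp⟩
  rw [Matroid.rk', this, csSup_singleton]

lemma base_ncard {B : Set α} (hB : M.IsBase B) : B.ncard = M.rk' M.E := by
  refine le_antisymm (ncard_le_rk'_s11 M hB.subset_ground hB.indep) ?_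
  obtain ⟨I, hIX, hI, hcard⟩ := exists_rk' M M.E
  obtain ⟨B', hB', hIB'⟩ := hI.exists_isBase_superset
  calc M.rk' M.E = I.ncard := hcard.symm
    _ ≤ B'.ncard := Set.ncard_le_ncard hIB' (Set.toFinite B')
    _ = B.ncard := by rw [Set.ncard_def, Set.ncard_def, hB'.encard_eq_encard_of_isBase hB]

lemma sum_indicator (B X : Set α) :
    ∑ e ∈ sfin X, (B.indicator (1 : α → ℝ)) e = ((B ∩ X).ncard : ℝ) := by
  classical
  have h1 : ∀ e ∈ sfin X, (B.indicator (1 : α → ℝ)) e = if e ∈ B then 1 else 0 := by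
    intro e _
    simp [Set.indicator_apply]
  rw [Finset.sum_congr rfl h1, Finset.sum_boole]
  congr 1
  rw [← card_sfin]
  congr 1
  ext e
  simp only [Finset.mem_filter, mem_sfin, Set.mem_inter_iff]
  tauto

end aux

section hull
variable {α : Type*} [Fintype α] (M : Matroid α)

lemma baseVecs_finite : M.baseVecs.Finite := by
  have : M.baseVecs ⊆ (fun B : Set α => B.indicator (1 : α → ℝ)) '' Set.univ := by
    rintro f ⟨B, hB, rfl⟩
    exact ⟨B, trivial, rfl⟩
  exact ((Set.finite_univ (α := Set α)).image _).subset this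

lemma sum_hull_eq {η : α → ℝ} (hη : η ∈ convexHull ℝ M.baseVecs) :
    ∑ e, η e = (M.rk' M.E : ℝ) := by
  have h : convexHull ℝ M.baseVecs ⊆ {x : α → ℝ | ∑ e, x e = (M.rk' M.E : ℝ)} := by
    apply convexHull_min
    · rintro f ⟨B, hB, rfl⟩
      have huniv : (Finset.univ : Finset α) = sfin Set.univ := by
        ext e; simp [mem_sfin]
      simp only [Set.mem_setOf_eq]
      rw [huniv, sum_indicator, Set.inter_univ, base_ncard M hB]
    · intro x hx y hy a b ha hb hab
      simp only [Set.mem_setOf_eq] at hx hy ⊢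
      simp only [Pi.add_apply, Pi.smul_apply, smul_eq_mul]
      rw [Finset.sum_add_distrib, ← Finset.mul_sum, ← Finset.mul_sum, hx, hy]
      nlinarith
  exact h hη

lemma sum_hull_le (X : Set α) {η : α → ℝ} (hη : η ∈ convexHull ℝ M.baseVecs) :
    ∑ e ∈ sfin X, η e ≤ (M.rk' X : ℝ) := by
  have h : convexHull ℝ M.baseVecs ⊆ {x : α → ℝ | ∑ e ∈ sfin X, x e ≤ (M.rk' X : ℝ)} := by
    apply convexHull_min
    · rintro f ⟨B, hB, rfl⟩
      simp only [Set.mem_setOf_eq]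
      rw [sum_indicator]
      exact_mod_cast ncard_le_rk'_s11 M Set.inter_subset_right
        (hB.indep.subset Set.inter_subset_left)
    · intro x hx y hy a b ha hb hab
      simp only [Set.mem_setOf_eq] at hx hy ⊢
      simp only [Pi.add_apply, Pi.smul_apply, smul_eq_mul]
      rw [Finset.sum_add_distrib, ← Finset.mul_sum, ← Finset.mul_sum]
      nlinarith
  exact h hη

lemma sum_hull_ge (X : Set α) {η : α → ℝ} (hη : η ∈ convexHull ℝ M.baseVecs) :
    (M.rk' M.E : ℝ) - (M.rk' (M.E \ X) : ℝ) ≤ ∑ e ∈ sfin X, η e := by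
  have h : convexHull ℝ M.baseVecs ⊆
      {x : α → ℝ | (M.rk' M.E : ℝ) - (M.rk' (M.E \ X) : ℝ) ≤ ∑ e ∈ sfin X, x e} := by
    apply convexHull_min
    · rintro f ⟨B, hB, rfl⟩
      simp only [Set.mem_setOf_eq]
      rw [sum_indicator]
      have h1 : (B ∩ X).ncard + (B \ X).ncard = B.ncard :=
        Set.ncard_inter_add_ncard_diff_eq_ncard B X (Set.toFinite B)
      have h2 : (B \ X).ncard ≤ M.rk' (M.E \ X) :=
        ncard_le_rk'_s11 M (Set.diff_subset_diff_left hB.subset_ground)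
          (hB.indep.subset Set.diff_subset)
      have h3 : B.ncard = M.rk' M.E := base_ncard M hB
      have h1' : ((B ∩ X).ncard : ℝ) + ((B \ X).ncard : ℝ) = (B.ncard : ℝ) := by
        exact_mod_cast h1
      have h2' : ((B \ X).ncard : ℝ) ≤ (M.rk' (M.E \ X) : ℝ) := by exact_mod_cast h2
      rw [h3] at h1'
      linarith
    · intro x hx y hy a b ha hb hab
      simp only [Set.mem_setOf_eq] at hx hy ⊢
      simp only [Pi.add_apply, Pi.smul_apply, smul_eq_mul]
      rw [Finset.sum_add_distrib, ← Finset.mul_sum, ← Finset.mul_sum]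
      nlinarith
  exact h hη

end hull

section level
variable {α : Type*} [Fintype α] {M : Matroid α}

lemma levelset_rank_le (M : Matroid α) (ηs : α → ℝ)
    (hmem : ηs ∈ convexHull ℝ M.baseVecs)
    (hmin : ∀ η ∈ convexHull ℝ M.baseVecs, ∑ e, ηs e ^ 2 ≤ ∑ e, η e ^ 2) (c : ℝ) :
    (M.rk' {e | ηs e < c} : ℝ) ≤ ∑ e ∈ sfin {e | ηs e < c}, ηs e := by
  classical
  set L := {e | ηs e < c} with hLdef
  by_contra hcon
  push_neg at hcon
  obtain ⟨I, hIL, hI, hIcard⟩ := exists_rk' M L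
  have hfin := baseVecs_finite M
  set T := hfin.toFinset with hTdef
  have hmem' := hmem
  rw [hfin.convexHull_eq] at hmem'
  obtain ⟨w, hw0, hw1, hwc⟩ := hmem' 
  have hrep : ∑ y ∈ T, w y • y = ηs := by
    rw [← hwc, Finset.centerMass_eq_of_sum_1 _ id hw1]
    rfl
  set g : (α → ℝ) → ℝ := fun y => ∑ e ∈ sfin L, y e with hgdef
  have hsum : ∑ y ∈ T, w y * g y = ∑ e ∈ sfin L, ηs e := by
    calc ∑ y ∈ T, w y * g y = ∑ y ∈ T, ∑ e ∈ sfin L, w y * y e := by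
          simp only [hgdef, Finset.mul_sum]
      _ = ∑ e ∈ sfin L, ∑ y ∈ T, w y * y e := Finset.sum_comm
      _ = ∑ e ∈ sfin L, ηs e := by
          refine Finset.sum_congr rfl fun e _ => ?_
          rw [← hrep, Finset.sum_apply]
          simp
  -- find a base vector with positive weight and small intersection with L
  have hexists : ∃ y ∈ T, 0 < w y ∧ g y ≤ ∑ e ∈ sfin L, ηs e := by
    by_contra h
    push_neg at h
    set m := ∑ e ∈ sfin L, ηs e with hmdef
    have hpos : ∃ y ∈ T, 0 < w y := by
      by_contra h2
      push_neg at h2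
      have : ∑ y ∈ T, w y = 0 :=
        Finset.sum_eq_zero fun y hy =>
          le_antisymm (h2 y hy) (hw0 y (hfin.mem_toFinset.mp hy))
      rw [hw1] at this; norm_num at this
    obtain ⟨y0, hy0T, hy0⟩ := hpos
    have hlt : ∑ y ∈ T, w y * m < ∑ y ∈ T, w y * g y := by
      apply Finset.sum_lt_sum
      · intro i hi
        rcases eq_or_lt_of_le (hw0 i (hfin.mem_toFinset.mp hi)) with h' | h'
        · simp [← h']
        · exact mul_le_mul_of_nonneg_left (le_of_lt (h i hi h')) (le_of_lt h')
      · exact ⟨y0, hy0T, by nlinarith [h y0 hy0T hy0]⟩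
    rw [hsum, ← Finset.sum_mul, hw1, one_mul] at hlt
    exact lt_irrefl _ hlt
  obtain ⟨y, hyT, hwy, hgy⟩ := hexists
  obtain ⟨B, hB, hyB⟩ := hfin.mem_toFinset.mp hyT
  have hgB : g y = ((B ∩ L).ncard : ℝ) := by rw [hyB]; exact sum_indicator B L
  have hlt : (B ∩ L).ncard < I.ncard := by
    have h1 : ((B ∩ L).ncard : ℝ) < (I.ncard : ℝ) := by
      rw [← hgB, hIcard]; exact lt_of_le_of_lt hgy hcon
    exact_mod_cast h1
  have henc : (B ∩ L).encard < I.encard := by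
    rw [← (B ∩ L).toFinite.cast_ncard_eq, ← I.toFinite.cast_ncard_eq]
    exact_mod_cast hlt
  obtain ⟨e, he, hins⟩ := (hB.indep.inter_right L).augment hI henc
  have heL : e ∈ L := hIL he.1
  have heB : e ∉ B := fun h => he.2 ⟨h, heL⟩
  obtain ⟨B', hB', hsub1, hsub2⟩ := hins.exists_isBase_subset_union_isBase hB
  have heB' : e ∈ B' := hsub1 (Set.mem_insert _ _)
  have hB'sub : B' ⊆ insert e B := by
    refine hsub2.trans (Set.union_subset ?_ (Set.subset_insert _ _))
    exact Set.insert_subset_insert Set.inter_subset_left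
  have hdiff1 : B' \ B = {e} := by
    apply Set.Subset.antisymm
    · rintro x ⟨hx1, hx2⟩
      rcases hB'sub hx1 with h | h
      · exact h
      · exact absurd h hx2
    · rintro x rfl
      exact ⟨heB', heB⟩
  have hc' : B'.ncard = B.ncard := by rw [base_ncard M hB', base_ncard M hB]
  have hdiff2 : (B \ B').ncard = 1 := by
    have e1 := Set.ncard_inter_add_ncard_diff_eq_ncard B B' (Set.toFinite B)
    have e2 := Set.ncard_inter_add_ncard_diff_eq_ncard B' B (Set.toFinite B')
    rw [hdiff1, Set.ncard_singleton, hc', Set.inter_comm] at e2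
    omega
  obtain ⟨f, hf⟩ := Set.ncard_eq_one.mp hdiff2
  have hfB : f ∈ B ∧ f ∉ B' := by
    have : f ∈ B \ B' := hf ▸ Set.mem_singleton f
    exact ⟨this.1, this.2⟩
  have hfL : f ∉ L := fun h =>
    hfB.2 (hsub1 (Set.mem_insert_of_mem _ ⟨hfB.1, h⟩))
  have hef : ηs e < ηs f := lt_of_lt_of_le heL (not_lt.mp hfL)
  have hne_ef : e ≠ f := fun h => hfL (h ▸ heL)
  set y' : α → ℝ := B'.indicator 1 with hy'def
  have hy'e : y' e = 1 := by simp [hy'def, Set.indicator_of_mem heB']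
  have hye : y e = 0 := by simp [hyB, Set.indicator_of_notMem heB]
  have hy'f : y' f = 0 := by simp [hy'def, Set.indicator_of_notMem hfB.2]
  have hyf : y f = 1 := by simp [hyB, Set.indicator_of_mem hfB.1]
  have hyy' : y ≠ y' := fun h => by rw [h, hy'e] at hye; norm_num at hye
  have hy'mem : y' ∈ M.baseVecs := ⟨B', hB', rfl⟩
  have hy'T : y' ∈ T := hfin.mem_toFinset.mpr hy'mem
  set ε : ℝ := min (w y) ((ηs f - ηs e) / 2) with hεdef
  have hε : 0 < ε := lt_min hwy (by linarith)
  have hεw : ε ≤ w y := min_le_left _ _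
  have hεd : ε ≤ (ηs f - ηs e) / 2 := min_le_right _ _
  set η' : α → ℝ := fun x => ηs x + ε * (y' x - y x) with hη'def
  have hsame : ∀ x, x ≠ e → x ≠ f → y' x = y x := by
    intro x hxe hxf
    by_cases hxB' : x ∈ B' <;> by_cases hxB : x ∈ B
    · simp [hy'def, hyB, Set.indicator_of_mem, hxB', hxB]
    · exact absurd (hdiff1 ▸ Set.mem_diff_of_mem hxB' hxB : x ∈ ({e} : Set α)) (by simpa using hxe)
    · exact absurd (hf ▸ Set.mem_diff_of_mem hxB hxB' : x ∈ ({f} : Set α)) (by simpa using hxf)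
    · simp [hy'def, hyB, Set.indicator_of_notMem, hxB', hxB]
  -- η' is in the hull
  have hη'mem : η' ∈ convexHull ℝ M.baseVecs := by
    rw [hfin.convexHull_eq]
    set w' : (α → ℝ) → ℝ :=
      fun z => w z + (if z = y' then ε else 0) - (if z = y then ε else 0) with hw'def
    refine ⟨w', fun z hz => ?_, ?_, ?_⟩
    · have h0 := hw0 z hz
      simp only [hw'def]
      split_ifs with h1 h2 h3
      · linarith
      · linarith
      · subst h3; linarith
      · linarith
    · simp only [hw'def]
      rw [Finset.sum_sub_distrib, Finset.sum_add_distrib, hw1,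
        Finset.sum_ite_eq' T y' (fun _ => ε), Finset.sum_ite_eq' T y (fun _ => ε),
        if_pos hy'T, if_pos hyT]
      ring
    · have hsum1 : ∑ z ∈ T, w' z = 1 := by
        simp only [hw'def]
        rw [Finset.sum_sub_distrib, Finset.sum_add_distrib, hw1,
          Finset.sum_ite_eq' T y' (fun _ => ε), Finset.sum_ite_eq' T y (fun _ => ε),
          if_pos hy'T, if_pos hyT]
        ring
      rw [Finset.centerMass_eq_of_sum_1 _ id hsum1]
      have hsplit : ∀ z : α → ℝ, w' z • id z =
          w z • z + (if z = y' then ε • z else 0) - (if z = y then ε • z else 0) := by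
        intro z
        simp only [hw'def, id_eq, sub_smul, add_smul, ite_smul, zero_smul]
      rw [Finset.sum_congr rfl (fun z _ => hsplit z), Finset.sum_sub_distrib,
        Finset.sum_add_distrib, hrep, Finset.sum_ite_eq' T y' (fun z => ε • z),
        Finset.sum_ite_eq' T y (fun z => ε • z), if_pos hy'T, if_pos hyT]
      funext x
      simp only [hη'def, Pi.sub_apply, Pi.add_apply, Pi.smul_apply, smul_eq_mul]
      ring
  -- η' has strictly smaller norm
  have hkey : ∀ x, η' x ^ 2 = ηs x ^ 2 +
      (if x = e then 2 * ε * ηs e + ε ^ 2 else if x = f then -(2 * ε * ηs f) + ε ^ 2 else 0) := by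
    intro x
    by_cases hx : x = e
    · subst hx
      rw [if_pos rfl]
      simp only [hη'def, hy'e, hye]
      ring
    · by_cases hx2 : x = f
      · subst hx2
        rw [if_neg hx, if_pos rfl]
        simp only [hη'def, hy'f, hyf]
        ring
      · rw [if_neg hx, if_neg hx2]
        simp only [hη'def, hsame x hx hx2]
        ring
  have hnorm : ∑ x, η' x ^ 2 < ∑ x, ηs x ^ 2 := by
    have hsplit2 : ∀ x : α, (if x = e then 2 * ε * ηs e + ε ^ 2
        else if x = f then -(2 * ε * ηs f) + ε ^ 2 else 0) =
        (if x = e then 2 * ε * ηs e + ε ^ 2 else 0) +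
        (if x = f then -(2 * ε * ηs f) + ε ^ 2 else 0) := by
      intro x
      by_cases hx : x = e
      · subst hx
        rw [if_pos rfl, if_pos rfl, if_neg hne_ef]
        ring
      · rw [if_neg hx, if_neg hx]
        ring
    calc ∑ x, η' x ^ 2
        = ∑ x, (ηs x ^ 2 + ((if x = e then 2 * ε * ηs e + ε ^ 2 else 0) +
            (if x = f then -(2 * ε * ηs f) + ε ^ 2 else 0))) := by
          refine Finset.sum_congr rfl fun x _ => ?_
          rw [hkey x, hsplit2 x]
      _ = ∑ x, ηs x ^ 2 + ((2 * ε * ηs e + ε ^ 2) + (-(2 * ε * ηs f) + ε ^ 2)) := by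
          rw [Finset.sum_add_distrib, Finset.sum_add_distrib,
            Finset.sum_ite_eq' Finset.univ e (fun _ => 2 * ε * ηs e + ε ^ 2),
            Finset.sum_ite_eq' Finset.univ f (fun _ => -(2 * ε * ηs f) + ε ^ 2),
            if_pos (Finset.mem_univ e), if_pos (Finset.mem_univ f)]
      _ < ∑ x, ηs x ^ 2 := by nlinarith
  exact absurd (hmin η' hη'mem) (not_le.mpr hnorm)

end level

set_option maxHeartbeats 1000000 in
/-- The following are equivalent: (i) `η*` is constant; (ii) `S(M) = |E|/r(E)`;
(iii) `D(M) = |E|/r(E)`; (iv) `S(M) = D(M)`. -/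
theorem homogeneous_tfae {α : Type*} [Fintype α] [Nonempty α]
    (M : Matroid α) (hE : M.E = Set.univ)
    (hloop : M.Loopless') (hrk : 0 < M.rk' M.E)
    (ηs : α → ℝ) (hmem : ηs ∈ convexHull ℝ M.baseVecs)
    (hmin : ∀ η ∈ convexHull ℝ M.baseVecs, ∑ e, ηs e ^ 2 ≤ ∑ e, η e ^ 2) :
    ((∃ c : ℝ, ∀ e, ηs e = c) ↔ M.strength = (Fintype.card α : ℝ) / (M.rk' M.E : ℝ)) ∧
    ((∃ c : ℝ, ∀ e, ηs e = c) ↔ M.arboricity = (Fintype.card α : ℝ) / (M.rk' M.E : ℝ)) ∧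
    ((∃ c : ℝ, ∀ e, ηs e = c) ↔ M.strength = M.arboricity) := by
  classical
  set r : ℕ := M.rk' M.E with hrdef
  set n : ℕ := Fintype.card α with hndef
  have hrpos : (0 : ℝ) < (r : ℝ) := by exact_mod_cast hrk
  have hnpos : (0 : ℝ) < (n : ℝ) := by exact_mod_cast Fintype.card_pos
  set Sset : Set ℝ := {s : ℝ | ∃ X, X ⊆ M.E ∧ M.rk' (M.E \ X) < M.rk' M.E ∧
    s = (Nat.card X : ℝ) / ((M.rk' M.E : ℝ) - (M.rk' (M.E \ X) : ℝ))} with hSdef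
  set Dset : Set ℝ := {s : ℝ | ∃ X, X ⊆ M.E ∧ 0 < M.rk' X ∧
    s = (Nat.card X : ℝ) / (M.rk' X : ℝ)} with hDdef
  have hSs : M.strength = sInf Sset := rfl
  have hDs : M.arboricity = sSup Dset := rfl
  -- |E|/r is a member of both sets (witness X = M.E)
  have hEcard : (Nat.card M.E : ℝ) = (n : ℝ) := by
    rw [Nat.card_coe_set_eq, hE, Set.ncard_univ, Nat.card_eq_fintype_card]
  have hSmem : (n : ℝ) / (r : ℝ) ∈ Sset := by
    refine ⟨M.E, le_refl _, ?_, ?_⟩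
    · rw [Set.diff_self, rk'_empty]; exact hrk
    · rw [Set.diff_self, rk'_empty, hEcard]; norm_num; rfl
  have hDmem : (n : ℝ) / (r : ℝ) ∈ Dset := ⟨M.E, le_refl _, hrk, by rw [hEcard]⟩
  have hSbdd : BddBelow Sset := by
    refine ⟨0, ?_⟩
    rintro s ⟨X, -, hlt, rfl⟩
    have : (0 : ℝ) < (M.rk' M.E : ℝ) - (M.rk' (M.E \ X) : ℝ) := by
      rw [sub_pos]; exact_mod_cast hlt
    positivity
  have hDbdd : BddAbove Dset := by
    refine ⟨(n : ℝ), ?_⟩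
    rintro s ⟨X, -, hpos, rfl⟩
    have h1 : (1 : ℝ) ≤ (M.rk' X : ℝ) := by exact_mod_cast hpos
    have h2 : (Nat.card X : ℝ) ≤ (n : ℝ) := by
      rw [Nat.card_coe_set_eq]
      exact_mod_cast (Set.ncard_le_ncard (Set.subset_univ X) Set.finite_univ).trans
        (le_of_eq (by rw [Set.ncard_univ, Nat.card_eq_fintype_card]))
    calc (Nat.card X : ℝ) / (M.rk' X : ℝ) ≤ (Nat.card X : ℝ) :=
          div_le_self (by positivity) h1
      _ ≤ (n : ℝ) := h2
  -- Part A : constant implies both equalities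
  have partA : (∃ c : ℝ, ∀ e, ηs e = c) →
      M.strength = (n : ℝ) / (r : ℝ) ∧ M.arboricity = (n : ℝ) / (r : ℝ) := by
    rintro ⟨c, hc⟩
    have hsum := sum_hull_eq M hmem
    have hcn : (n : ℝ) * c = (r : ℝ) := by
      rw [← hsum]
      simp [hc, Finset.sum_const, nsmul_eq_mul]
      exact Or.inl rfl
    have hcpos : 0 < c := by nlinarith
    have hsumX : ∀ X : Set α, ∑ e ∈ sfin X, ηs e = c * (X.ncard : ℝ) := by
      intro X
      rw [Finset.sum_congr rfl (fun e _ => hc e), Finset.sum_const, card_sfin,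
        nsmul_eq_mul, mul_comm]
    constructor
    · rw [hSs]
      refine le_antisymm (csInf_le hSbdd hSmem) (le_csInf ⟨_, hSmem⟩ ?_)
      rintro s ⟨X, -, hlt, rfl⟩
      have hd : (0 : ℝ) < (M.rk' M.E : ℝ) - (M.rk' (M.E \ X) : ℝ) := by
        rw [sub_pos]; exact_mod_cast hlt
      have hge : (M.rk' M.E : ℝ) - (M.rk' (M.E \ X) : ℝ) ≤ c * (X.ncard : ℝ) := by
        rw [← hsumX X]; exact sum_hull_ge M X hmem
      have hX0 : (0 : ℝ) < (X.ncard : ℝ) := by nlinarith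
      rw [Nat.card_coe_set_eq, div_le_div_iff₀ hrpos hd]
      nlinarith
    · rw [hDs]
      refine le_antisymm (csSup_le ⟨_, hDmem⟩ ?_) (le_csSup hDbdd hDmem)
      rintro s ⟨X, -, hpos, rfl⟩
      have hXr : (0 : ℝ) < (M.rk' X : ℝ) := by exact_mod_cast hpos
      have hle : c * (X.ncard : ℝ) ≤ (M.rk' X : ℝ) := by
        rw [← hsumX X]; exact sum_hull_le M X hmem
      have hX0 : (0 : ℝ) ≤ (X.ncard : ℝ) := by positivity
      rw [Nat.card_coe_set_eq, div_le_div_iff₀ hXr hrpos]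
      nlinarith
  -- Part B : nonconstant implies strict inequalities
  have partB : ¬(∃ c : ℝ, ∀ e, ηs e = c) →
      M.strength < (n : ℝ) / (r : ℝ) ∧ (n : ℝ) / (r : ℝ) < M.arboricity := by
    intro hne
    push_neg at hne
    set vals : Finset ℝ := Finset.image ηs Finset.univ with hvals
    have hvne : vals.Nonempty := ⟨ηs (Classical.arbitrary α), by simp [hvals]⟩
    set cmin : ℝ := vals.min' hvne with hcmin
    set cmax : ℝ := vals.max' hvne with hcmax
    have hmemv : ∀ e, ηs e ∈ vals := fun e => by simp [hvals]
    have hlemax : ∀ e, ηs e ≤ cmax := fun e => vals.le_max' _ (hmemv e)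
    have hgemin : ∀ e, cmin ≤ ηs e := fun e => vals.min'_le _ (hmemv e)
    have hminmax : cmin < cmax := by
      rcases lt_or_ge cmin cmax with h | h
      · exact h
      · exfalso
        obtain ⟨e, he⟩ := hne cmin
        exact he (le_antisymm (le_trans (hlemax e) h) (hgemin e))
    obtain ⟨emax, hemax⟩ : ∃ e, ηs e = cmax := by
      have := vals.max'_mem hvne
      simpa [hvals, eq_comm] using this
    obtain ⟨emin, hemin⟩ : ∃ e, ηs e = cmin := by
      have := vals.min'_mem hvne
      simpa [hvals, eq_comm] using this
    have hsum := sum_hull_eq M hmem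
    have hcminlt : cmin * (n : ℝ) < (r : ℝ) := by
      have h1 : ∑ _e : α, cmin < ∑ e, ηs e := by
        refine Finset.sum_lt_sum (fun i _ => hgemin i) ⟨emax, Finset.mem_univ _, ?_⟩
        rw [hemax]; exact hminmax
      rw [hsum] at h1
      simpa [Finset.sum_const, nsmul_eq_mul, mul_comm] using h1
    have hcmaxgt : (r : ℝ) < cmax * (n : ℝ) := by
      have h1 : ∑ e, ηs e < ∑ _e : α, cmax := by
        refine Finset.sum_lt_sum (fun i _ => hlemax i) ⟨emin, Finset.mem_univ _, ?_⟩
        rw [hemin]; exact hminmax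
      rw [hsum] at h1
      simpa [Finset.sum_const, nsmul_eq_mul, mul_comm] using h1
    have hcmaxpos : 0 < cmax := by nlinarith
    constructor
    -- strength part
    · set X₁ : Set α := {e | ηs e = cmax} with hX₁def
      set L₁ : Set α := {e | ηs e < cmax} with hL₁def
      have hL₁ : M.E \ X₁ = L₁ := by
        rw [hE]
        ext e
        simp only [Set.mem_diff, Set.mem_univ, true_and, hX₁def, hL₁def, Set.mem_setOf_eq]
        constructor
        · intro h; exact lt_of_le_of_ne (hlemax e) h
        · intro h; exact ne_of_lt h
      have hrkL : (M.rk' L₁ : ℝ) ≤ ∑ e ∈ sfin L₁, ηs e :=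
        levelset_rank_le M ηs hmem hmin cmax
      have hcompl : sfin L₁ = (sfin X₁)ᶜ := by
        ext e
        simp only [Finset.mem_compl, mem_sfin, hX₁def, hL₁def, Set.mem_setOf_eq]
        constructor
        · intro h; exact ne_of_lt h
        · intro h; exact lt_of_le_of_ne (hlemax e) h
      have hsumX₁ : ∑ e ∈ sfin X₁, ηs e = cmax * (X₁.ncard : ℝ) := by
        rw [Finset.sum_congr rfl (fun e he => ((mem_sfin (X := X₁)).mp he : ηs e = cmax)),
          Finset.sum_const, card_sfin, nsmul_eq_mul, mul_comm]
      have hsplit : ∑ e ∈ sfin X₁, ηs e + ∑ e ∈ sfin L₁, ηs e = (r : ℝ) := by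
        rw [hcompl, Finset.sum_add_sum_compl, hsum]
      have hX₁pos : (0 : ℝ) < (X₁.ncard : ℝ) := by
        have : emax ∈ X₁ := hemax
        have h1 : 0 < X₁.ncard := (Set.ncard_pos (Set.toFinite _)).mpr ⟨emax, this⟩
        exact_mod_cast h1
      have hrkL' : (M.rk' L₁ : ℝ) ≤ (r : ℝ) - cmax * (X₁.ncard : ℝ) := by
        rw [← hsumX₁] at *
        linarith
      have hrkLlt : M.rk' (M.E \ X₁) < M.rk' M.E := by
        rw [hL₁]
        have : (M.rk' L₁ : ℝ) < (r : ℝ) := by nlinarith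
        exact_mod_cast this
      have hd : (0 : ℝ) < (r : ℝ) - (M.rk' (M.E \ X₁) : ℝ) := by
        rw [sub_pos]; exact_mod_cast hrkLlt
      have hdge : cmax * (X₁.ncard : ℝ) ≤ (r : ℝ) - (M.rk' (M.E \ X₁) : ℝ) := by
        rw [hL₁]; linarith
      have hmemS : (Nat.card X₁ : ℝ) / ((r : ℝ) - (M.rk' (M.E \ X₁) : ℝ)) ∈ Sset :=
        ⟨X₁, by rw [hE]; exact Set.subset_univ _, hrkLlt, rfl⟩
      have hle : M.strength ≤ (Nat.card X₁ : ℝ) / ((r : ℝ) - (M.rk' (M.E \ X₁) : ℝ)) := by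
        rw [hSs]; exact csInf_le hSbdd hmemS
      refine lt_of_le_of_lt hle ?_
      rw [Nat.card_coe_set_eq, div_lt_div_iff₀ hd hrpos]
      nlinarith
    -- arboricity part
    · set Fset : Finset ℝ := vals.filter (fun v => cmin < v) with hFset
      have hFne : Fset.Nonempty := ⟨cmax, by
        rw [hFset, Finset.mem_filter]
        exact ⟨by rw [← hemax]; exact hmemv emax, hminmax⟩⟩
      set c₂ : ℝ := Fset.min' hFne with hc₂def
      have hc₂ : cmin < c₂ := (Finset.mem_filter.mp (Fset.min'_mem hFne)).2
      have hX₂eq : ∀ e, ηs e < c₂ ↔ ηs e = cmin := by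
        intro e
        constructor
        · intro h
          by_contra hne'
          have h1 : cmin < ηs e := lt_of_le_of_ne (hgemin e) (Ne.symm hne')
          have h2 : c₂ ≤ ηs e := Fset.min'_le _ (Finset.mem_filter.mpr ⟨hmemv e, h1⟩)
          linarith
        · intro h; rw [h]; exact hc₂
      set X₂ : Set α := {e | ηs e < c₂} with hX₂def
      have hX₂ne : emin ∈ X₂ := by
        rw [hX₂def, Set.mem_setOf_eq, hemin]; exact hc₂
      have hsumX₂ : ∑ e ∈ sfin X₂, ηs e = cmin * (X₂.ncard : ℝ) := by
        rw [Finset.sum_congr rfl (fun e he => (hX₂eq e).mp ((mem_sfin (X := X₂)).mp he)),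
          Finset.sum_const, card_sfin, nsmul_eq_mul, mul_comm]
      have hrkle : (M.rk' X₂ : ℝ) ≤ cmin * (X₂.ncard : ℝ) := by
        rw [← hsumX₂]
        exact levelset_rank_le M ηs hmem hmin c₂
      have hrkpos : 0 < M.rk' X₂ := by
        have h1 : ({emin} : Set α).ncard ≤ M.rk' X₂ :=
          ncard_le_rk'_s11 M (Set.singleton_subset_iff.mpr hX₂ne)
            (hloop emin (by rw [hE]; trivial))
        rwa [Set.ncard_singleton] at h1
      have hX₂pos : (0 : ℝ) < (X₂.ncard : ℝ) := by
        have h1 : 0 < X₂.ncard := (Set.ncard_pos (Set.toFinite _)).mpr ⟨emin, hX₂ne⟩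
        exact_mod_cast h1
      have hmemD : (Nat.card X₂ : ℝ) / (M.rk' X₂ : ℝ) ∈ Dset :=
        ⟨X₂, by rw [hE]; exact Set.subset_univ _, hrkpos, rfl⟩
      have hle : (Nat.card X₂ : ℝ) / (M.rk' X₂ : ℝ) ≤ M.arboricity := by
        rw [hDs]; exact le_csSup hDbdd hmemD
      refine lt_of_lt_of_le ?_ hle
      have hXr : (0 : ℝ) < (M.rk' X₂ : ℝ) := by exact_mod_cast hrkpos
      rw [Nat.card_coe_set_eq, div_lt_div_iff₀ hrpos hXr]
      have h1 : (n : ℝ) * (M.rk' X₂ : ℝ) ≤ (n : ℝ) * (cmin * (X₂.ncard : ℝ)) :=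
        mul_le_mul_of_nonneg_left hrkle (le_of_lt hnpos)
      have h2 : (cmin * (n : ℝ)) * (X₂.ncard : ℝ) < (r : ℝ) * (X₂.ncard : ℝ) :=
        mul_lt_mul_of_pos_right hcminlt hX₂pos
      calc (n : ℝ) * (M.rk' X₂ : ℝ) ≤ (n : ℝ) * (cmin * (X₂.ncard : ℝ)) := h1
        _ = (cmin * (n : ℝ)) * (X₂.ncard : ℝ) := by ring
        _ < (r : ℝ) * (X₂.ncard : ℝ) := h2
        _ = (X₂.ncard : ℝ) * (r : ℝ) := by ring
  refine ⟨⟨fun h => (partA h).1, fun h => ?_⟩, ⟨fun h => (partA h).2, fun h => ?_⟩,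
    ⟨fun h => ((partA h).1).trans ((partA h).2).symm, fun h => ?_⟩⟩
  · by_contra hc
    have := (partB hc).1
    rw [h] at this
    exact lt_irrefl _ this
  · by_contra hc
    have := (partB hc).2
    rw [h] at this
    exact lt_irrefl _ this
  · by_contra hc
    have h1 := (partB hc).1
    have h2 := (partB hc).2
    rw [h] at h1
    linarith
end

section
/- If τ(M) = |E|/r(E), then η* is a constant vector; likewise, if υ(M) = |E|/r(E), then η* is a constant vector. -/
open Set Matroid

/-- The base packing value `τ(M)`. -/
noncomputable def Matroid.packingValue {α : Type*} [Fintype α] (M : Matroid α) : ℝ :=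
  sSup {t : ℝ | ∃ lam : Set α → ℝ, (∀ B, 0 ≤ lam B) ∧ (∀ B, ¬ M.IsBase B → lam B = 0) ∧
    (∀ e ∈ M.E, (∑ B : Set α, B.indicator (fun _ ↦ lam B) e) ≤ 1) ∧
    t = ∑ B : Set α, lam B}

/-- The base covering value `υ(M)`. -/
noncomputable def Matroid.coveringValue {α : Type*} [Fintype α] (M : Matroid α) : ℝ :=
  sInf {t : ℝ | ∃ kap : Set α → ℝ, (∀ B, 0 ≤ kap B) ∧ (∀ B, ¬ M.IsBase B → kap B = 0) ∧
    (∀ e ∈ M.E, 1 ≤ (∑ B : Set α, B.indicator (fun _ ↦ kap B) e)) ∧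
    t = ∑ B : Set α, kap B}

lemma cardB_eq_rk {α : Type*} [Fintype α] (M : Matroid α) (B : Set α)
    (hB : M.IsBase B) : Nat.card B = M.rk' M.E := by
  have hub : ∀ n ∈ {n : ℕ | ∃ I, I ⊆ M.E ∧ M.Indep I ∧ n = Nat.card I}, n ≤ Nat.card B := by
    rintro n ⟨I, -, hI, rfl⟩
    obtain ⟨B', hB', hIB'⟩ := hI.exists_isBase_superset
    have h1 : I.encard ≤ B.encard :=
      (Set.encard_le_encard hIB').trans_eq (hB'.encard_eq_encard_of_isBase hB)
    rw [Nat.card_coe_set_eq, Nat.card_coe_set_eq, Set.ncard_def, Set.ncard_def]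
    exact ENat.toNat_le_toNat h1 (Set.toFinite B).encard_lt_top.ne
  exact le_antisymm (le_csSup ⟨_, hub⟩ ⟨B, hB.subset_ground, hB.indep, rfl⟩)
    (csSup_le ⟨Nat.card B, B, hB.subset_ground, hB.indep, rfl⟩ hub)

lemma sum_indicator_card {α : Type*} [Fintype α] (B : Set α) :
    ∑ e, B.indicator (1 : α → ℝ) e = (Nat.card B : ℝ) := by
  rw [Nat.card_coe_set_eq]
  classical
  simp [Set.indicator_apply, Finset.sum_ite, Set.ncard_eq_toFinset_card']

lemma hull_mem_of_weights {α : Type*} [Fintype α] (M : Matroid α) (w : Set α → ℝ)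
    (hw0 : ∀ B, 0 ≤ w B) (hwb : ∀ B, ¬ M.IsBase B → w B = 0)
    (hs : 0 < ∑ B : Set α, w B) :
    (fun e => (∑ B : Set α, w B * B.indicator 1 e) / (∑ B : Set α, w B))
      ∈ convexHull ℝ M.baseVecs := by
  classical
  have h := Finset.centerMass_mem_convexHull (t := ({B ∈ Finset.univ | w B ≠ 0} : Finset (Set α)))
    (w := w) (z := fun B : Set α => (B.indicator 1 : α → ℝ)) (s := M.baseVecs)
    (fun B _ => hw0 B)
    (by rwa [Finset.sum_filter_ne_zero])
    (by
      intro B hBmem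
      simp only [Finset.mem_filter] at hBmem
      exact ⟨B, by_contra fun h => hBmem.2 (hwb B h), rfl⟩)
  rw [Finset.centerMass_filter_ne_zero, Finset.centerMass] at h
  convert h using 1
  funext e
  simp only [Finset.smul_sum, Pi.smul_apply, Finset.sum_apply, smul_eq_mul]
  rw [div_eq_inv_mul, Finset.mul_sum]

set_option maxHeartbeats 1000000 in
/-- If `τ(M) = |E|/r(E)` then `η*` is constant; likewise if `υ(M) = |E|/r(E)` then `η*`
is constant. -/
theorem etaStar_const_of_packing_or_covering_eq_density {α : Type*} [Fintype α] [Nonempty α]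
    (M : Matroid α) (hE : M.E = Set.univ)
    (hloop : M.Loopless') (hrk : 0 < M.rk' M.E)
    (ηs : α → ℝ) (hmem : ηs ∈ convexHull ℝ M.baseVecs)
    (hmin : ∀ η ∈ convexHull ℝ M.baseVecs, ∑ e, ηs e ^ 2 ≤ ∑ e, η e ^ 2) :
    (M.packingValue = (Fintype.card α : ℝ) / (M.rk' M.E : ℝ) → ∃ c : ℝ, ∀ e, ηs e = c) ∧
    (M.coveringValue = (Fintype.card α : ℝ) / (M.rk' M.E : ℝ) → ∃ c : ℝ, ∀ e, ηs e = c) := by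
  classical
  obtain ⟨n, hndef⟩ : ∃ y : ℝ, y = (Fintype.card α : ℝ) := ⟨_, rfl⟩
  obtain ⟨r, hrdef⟩ : ∃ y : ℝ, y = (M.rk' M.E : ℝ) := ⟨_, rfl⟩
  have hnpos : (0:ℝ) < n := by rw [hndef]; exact_mod_cast Fintype.card_pos
  have hn1' : (1:ℝ) ≤ n := by rw [hndef]; exact_mod_cast Fintype.card_pos
  have hrpos : (0:ℝ) < r := by rw [hrdef]; exact_mod_cast hrk
  obtain ⟨c, hcdef⟩ : ∃ y : ℝ, y = r / n := ⟨_, rfl⟩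
  obtain ⟨q, hqdef⟩ : ∃ y : ℝ, y = n / r := ⟨_, rfl⟩
  have hcpos : 0 < c := by rw [hcdef]; positivity
  have hqpos : 0 < q := by rw [hqdef]; positivity
  have hcq : c * q = 1 := by rw [hcdef, hqdef]; field_simp
  have hnc : n * c = r := by rw [hcdef]; field_simp
  -- every point of the hull has coordinate sum r
  have hsumhull : ∀ x ∈ convexHull ℝ M.baseVecs, ∑ e, x e = r := by
    intro x hx
    have hsub : convexHull ℝ M.baseVecs ⊆ {f : α → ℝ | ∑ e, f e = r} := by
      apply convexHull_min
      · rintro f ⟨B, hB, rfl⟩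
        simp only [mem_setOf_eq]
        rw [sum_indicator_card B, cardB_eq_rk M B hB, ← hrdef]
      · intro f hf g hg a b ha hb hab
        simp only [mem_setOf_eq] at hf hg ⊢
        have : ∑ e, (a • f + b • g) e = a * ∑ e, f e + b * ∑ e, g e := by
          simp [Finset.mul_sum, Finset.sum_add_distrib]
        rw [this, hf, hg]
        linear_combination r * hab
    exact hsub hx
  have hηsum : ∑ e, ηs e = r := hsumhull ηs hmem
  -- expansion identity
  have expand : ∀ y : α → ℝ, ∑ e, y e = r →
      ∑ e, (y e - c)^2 = ∑ e, y e ^ 2 - 2*c*r + n*c^2 := by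
    intro y hy
    have h1 : ∀ e : α, (y e - c)^2 = y e ^ 2 - 2*c* y e + c^2 := fun e => by ring
    simp_rw [h1]
    rw [Finset.sum_add_distrib, Finset.sum_sub_distrib, ← Finset.mul_sum, hy,
      Finset.sum_const, Finset.card_univ, nsmul_eq_mul, ← hndef]
  -- main closure lemma
  have hmain : (∀ δ : ℝ, 0 < δ → ∃ x ∈ convexHull ℝ M.baseVecs, ∀ e, |x e - c| ≤ δ) →
      ∃ c' : ℝ, ∀ e, ηs e = c' := by
    intro h
    refine ⟨c, ?_⟩
    have hkey : ∀ δ : ℝ, 0 < δ → ∑ e, (ηs e - c)^2 ≤ n * δ^2 := by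
      intro δ hδ
      obtain ⟨x, hx, hxb⟩ := h δ hδ
      have h1 : ∑ e, ηs e ^ 2 ≤ ∑ e, x e ^ 2 := hmin x hx
      have hxs : ∑ e, x e = r := hsumhull x hx
      have e1 := expand ηs hηsum
      have e2 := expand x hxs
      have e3 : ∑ e, (x e - c)^2 ≤ ∑ _e : α, δ^2 := by
        refine Finset.sum_le_sum fun e _ => ?_
        have := hxb e
        nlinarith [abs_nonneg (x e - c), sq_abs (x e - c)]
      rw [Finset.sum_const, Finset.card_univ, nsmul_eq_mul, ← hndef] at e3
      rw [e1]; rw [e2] at e3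
      linarith
    have h0 : ∑ e, (ηs e - c)^2 ≤ 0 := by
      refine le_of_forall_pos_le_add fun ε hε => ?_
      have hδ : (0:ℝ) < Real.sqrt (ε / n) := Real.sqrt_pos.2 (by positivity)
      have := hkey _ hδ
      rw [Real.sq_sqrt (by positivity)] at this
      rw [zero_add]
      calc ∑ e, (ηs e - c)^2 ≤ n * (ε / n) := this
        _ = ε := by field_simp
    have hz := (Finset.sum_eq_zero_iff_of_nonneg
      (fun i _ => sq_nonneg (ηs i - c))).1
      (le_antisymm h0 (Finset.sum_nonneg fun i _ => sq_nonneg _))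
    intro e
    have := hz e (Finset.mem_univ e)
    have := sq_eq_zero_iff.1 this
    linarith
  -- numerator identity
  have hnum : ∀ (w : Set α → ℝ) (e : α), ∑ B : Set α, B.indicator (fun _ => w B) e
      = ∑ B : Set α, w B * B.indicator 1 e := by
    intro w e
    refine Finset.sum_congr rfl fun B _ => ?_
    by_cases h : e ∈ B <;> simp [Set.indicator_apply, h]
  have hn1 : ((Fintype.card α - 1 : ℕ) : ℝ) = n - 1 := by
    rw [Nat.cast_sub Fintype.card_pos, Nat.cast_one, ← hndef]
  constructor
  · -- packing case
    intro hτ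
    rw [← hndef, ← hrdef, ← hqdef] at hτ
    apply hmain
    intro δ hδ
    have hτ' : sSup {t : ℝ | ∃ lam : Set α → ℝ, (∀ B, 0 ≤ lam B) ∧
        (∀ B, ¬ M.IsBase B → lam B = 0) ∧
        (∀ e ∈ M.E, (∑ B : Set α, B.indicator (fun _ ↦ lam B) e) ≤ 1) ∧
        t = ∑ B : Set α, lam B} = q := hτ
    set S := {t : ℝ | ∃ lam : Set α → ℝ, (∀ B, 0 ≤ lam B) ∧ (∀ B, ¬ M.IsBase B → lam B = 0) ∧
      (∀ e ∈ M.E, (∑ B : Set α, B.indicator (fun _ ↦ lam B) e) ≤ 1) ∧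
      t = ∑ B : Set α, lam B} with hSdef
    have h0S : (0:ℝ) ∈ S := ⟨fun _ => 0, fun _ => le_refl 0, fun _ _ => rfl,
      by simp, by simp⟩
    have hSbdd : BddAbove S := by
      by_contra hb
      rw [Real.sSup_of_not_bddAbove hb] at hτ'
      exact absurd hτ'.symm hqpos.ne'
    obtain ⟨θ, hθdef⟩ : ∃ y : ℝ, y = δ / n := ⟨_, rfl⟩
    have hθpos : 0 < θ := by rw [hθdef]; positivity
    have hnθ : n * θ = δ := by rw [hθdef]; field_simp
    have hθδ : θ ≤ δ := by nlinarith [hθpos, hn1', hnθ]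
    obtain ⟨δ₀, hδ₀def⟩ : ∃ y : ℝ, y = min (q/2) (θ * q / (2*c)) := ⟨_, rfl⟩
    have hδ₀pos : 0 < δ₀ := by
      rw [hδ₀def]; exact lt_min (by positivity) (by positivity)
    have hδ₀a : δ₀ ≤ q/2 := hδ₀def ▸ min_le_left _ _
    have hδ₀b : δ₀ ≤ θ * q / (2*c) := hδ₀def ▸ min_le_right _ _
    obtain ⟨s, hsS, hslt⟩ : ∃ s ∈ S, q - δ₀ < s :=
      exists_lt_of_lt_csSup ⟨0, h0S⟩ (by rw [hτ']; linarith)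
    have hsle : s ≤ q := hτ' ▸ le_csSup hSbdd hsS
    have hshalf : q/2 < s := by linarith
    have hspos : 0 < s := by linarith
    obtain ⟨lam, hl0, hlb, hlcon, hlsum⟩ := hsS
    obtain ⟨x, hxdef⟩ : ∃ y : α → ℝ,
        y = fun e => (∑ B : Set α, lam B * B.indicator 1 e) / s := ⟨_, rfl⟩
    have hxval : ∀ e, x e = (∑ B : Set α, lam B * B.indicator 1 e) / s := fun e => by
      rw [hxdef]
    have hxmem : x ∈ convexHull ℝ M.baseVecs := by
      have h := hull_mem_of_weights M lam hl0 hlb (by rw [← hlsum]; exact hspos)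
      rw [← hlsum] at h
      rwa [hxdef]
    have hxup : ∀ e, x e ≤ c + θ := by
      intro e
      have hcon := hlcon e (by rw [hE]; trivial)
      rw [hnum] at hcon
      have hx1 : x e ≤ 1 / s := by rw [hxval e]; gcongr
      have key : 1 / s ≤ c + θ := by
        rw [div_le_iff₀ hspos]
        have h1 : c * δ₀ ≤ θ * q / 2 := by
          have h3 : c * δ₀ ≤ c * (θ * q / (2*c)) := by gcongr
          have h4 : c * (θ * q / (2*c)) = θ * q / 2 := by
            field_simp
          linarith
        have p1 : c * (q - δ₀) < c * s := by gcongr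
        have p2 : θ * (q/2) < θ * s := by gcongr
        nlinarith [p1, p2, h1, hcq, mul_le_mul_of_nonneg_left hδ₀a hθpos.le]
      linarith
    have hxsum : ∑ e, x e = r := hsumhull x hxmem
    refine ⟨x, hxmem, fun e => ?_⟩
    rw [abs_le]
    constructor
    · -- -δ ≤ x e - c
      have herase : ∑ f ∈ Finset.univ.erase e, x f = r - x e := by
        rw [Finset.sum_erase_eq_sub (Finset.mem_univ e), hxsum]
      have hbound : ∑ f ∈ Finset.univ.erase e, x f ≤ (n - 1) * (c + θ) := by
        calc ∑ f ∈ Finset.univ.erase e, x f ≤ ∑ _f ∈ Finset.univ.erase e, (c + θ) :=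
              Finset.sum_le_sum fun f _ => hxup f
          _ = ((Fintype.card α - 1 : ℕ) : ℝ) * (c + θ) := by
              rw [Finset.sum_const, Finset.card_erase_of_mem (Finset.mem_univ e),
                Finset.card_univ, nsmul_eq_mul]
          _ = (n - 1) * (c + θ) := by rw [hn1]
      nlinarith [hbound, herase, hnc, hnθ, hθpos, hcpos]
    · -- x e - c ≤ δ
      linarith [hxup e]
  · -- covering case
    intro hυ
    rw [← hndef, ← hrdef, ← hqdef] at hυ
    apply hmain
    intro δ hδ
    have hυ' : sInf {t : ℝ | ∃ kap : Set α → ℝ, (∀ B, 0 ≤ kap B) ∧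
        (∀ B, ¬ M.IsBase B → kap B = 0) ∧
        (∀ e ∈ M.E, 1 ≤ (∑ B : Set α, B.indicator (fun _ ↦ kap B) e)) ∧
        t = ∑ B : Set α, kap B} = q := hυ
    set K := {t : ℝ | ∃ kap : Set α → ℝ, (∀ B, 0 ≤ kap B) ∧ (∀ B, ¬ M.IsBase B → kap B = 0) ∧
      (∀ e ∈ M.E, 1 ≤ (∑ B : Set α, B.indicator (fun _ ↦ kap B) e)) ∧
      t = ∑ B : Set α, kap B} with hKdef
    have hKbdd : BddBelow K := by
      refine ⟨0, ?_⟩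
      rintro t ⟨kap, h0, -, -, rfl⟩
      exact Finset.sum_nonneg fun B _ => h0 B
    have hKne : K.Nonempty := by
      by_contra h
      rw [not_nonempty_iff_eq_empty] at h
      rw [h, Real.sInf_empty] at hυ'
      exact absurd hυ'.symm hqpos.ne'
    obtain ⟨θ, hθdef⟩ : ∃ y : ℝ, y = δ / n := ⟨_, rfl⟩
    have hθpos : 0 < θ := by rw [hθdef]; positivity
    have hnθ : n * θ = δ := by rw [hθdef]; field_simp
    have hθδ : θ ≤ δ := by nlinarith [hθpos, hn1', hnθ]
    obtain ⟨δ₀, hδ₀def⟩ : ∃ y : ℝ, y = θ * q / c := ⟨_, rfl⟩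
    have hδ₀pos : 0 < δ₀ := by rw [hδ₀def]; positivity
    have hδ₀eq : c * δ₀ = θ * q := by rw [hδ₀def]; field_simp
    obtain ⟨s, hsK, hslt⟩ : ∃ s ∈ K, s < q + δ₀ :=
      exists_lt_of_csInf_lt hKne (by rw [hυ']; linarith)
    have hsge : q ≤ s := hυ' ▸ csInf_le hKbdd hsK
    have hspos : 0 < s := lt_of_lt_of_le hqpos hsge
    obtain ⟨kap, hk0, hkb, hkcon, hksum⟩ := hsK
    obtain ⟨x, hxdef⟩ : ∃ y : α → ℝ,
        y = fun e => (∑ B : Set α, kap B * B.indicator 1 e) / s := ⟨_, rfl⟩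
    have hxval : ∀ e, x e = (∑ B : Set α, kap B * B.indicator 1 e) / s := fun e => by
      rw [hxdef]
    have hxmem : x ∈ convexHull ℝ M.baseVecs := by
      have h := hull_mem_of_weights M kap hk0 hkb (by rw [← hksum]; exact hspos)
      rw [← hksum] at h
      rwa [hxdef]
    have hxlow : ∀ e, c - θ ≤ x e := by
      intro e
      have hcon := hkcon e (by rw [hE]; trivial)
      rw [hnum] at hcon
      have hx1 : 1 / s ≤ x e := by rw [hxval e]; gcongr
      have key : c - θ ≤ 1 / s := by
        rw [le_div_iff₀ hspos]
        have p1 : c * s < c * (q + δ₀) := by gcongr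
        have p2 : θ * q ≤ θ * s := by gcongr
        nlinarith [p1, p2, hδ₀eq, hcq]
      linarith
    have hxsum : ∑ e, x e = r := hsumhull x hxmem
    refine ⟨x, hxmem, fun e => ?_⟩
    rw [abs_le]
    constructor
    · linarith [hxlow e]
    · have herase : ∑ f ∈ Finset.univ.erase e, x f = r - x e := by
        rw [Finset.sum_erase_eq_sub (Finset.mem_univ e), hxsum]
      have hbound : (n - 1) * (c - θ) ≤ ∑ f ∈ Finset.univ.erase e, x f := by
        calc (n - 1) * (c - θ) = ((Fintype.card α - 1 : ℕ) : ℝ) * (c - θ) := by rw [hn1]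
          _ = ∑ _f ∈ Finset.univ.erase e, (c - θ) := by
              rw [Finset.sum_const, Finset.card_erase_of_mem (Finset.mem_univ e),
                Finset.card_univ, nsmul_eq_mul]
          _ ≤ ∑ f ∈ Finset.univ.erase e, x f := Finset.sum_le_sum fun f _ => hxlow f
      nlinarith [hbound, herase, hnc, hnθ, hθpos, hcpos]
end

section
/- Let X ⊆ E satisfy cl(E−X) ≠ E. Then S(M) ≤ S(M/(E−X)) and τ(M) ≤ τ(M/(E−X)), where M/(E−X) is the contraction of E−X in M. -/
open Set Matroid

/-- Deletion of `X` from `M`: the restriction of `M` to `M.E \ X`. -/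
def Matroid.delete' {α : Type*} (M : Matroid α) (X : Set α) : Matroid α := M ↾ (M.E \ X)

/-- Contraction of `X` in `M`, defined by duality with deletion. -/
def Matroid.contract' {α : Type*} (M : Matroid α) (X : Set α) : Matroid α := (M✶.delete' X)✶

namespace Matroid

variable {α : Type*} {M : Matroid α} {B I J X Y C D Z : Set α}

lemma contract'_eq (M : Matroid α) (C : Set α) : M.contract' C = (M✶ ↾ (M.E \ C))✶ := rfl

@[simp] lemma contract'_ground (M : Matroid α) (C : Set α) :
    (M.contract' C).E = M.E \ C := rfl

lemma ncard_le_ncard_basis' [Fintype α] (hJ : M.Indep J) (hJX : J ⊆ X) (hI : M.IsBasis' I X) :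
    J.ncard ≤ I.ncard := by
  obtain ⟨J', hJ', hJJ'⟩ := hJ.subset_isBasis'_of_subset hJX
  have h1 : J'.encard = I.encard := hJ'.encard_eq_encard hI
  have h2 : J.ncard ≤ J'.ncard := Set.ncard_le_ncard hJJ' J'.toFinite
  rwa [Set.ncard_def, Set.ncard_def, h1, ← Set.ncard_def, ← Set.ncard_def] at h2

lemma rk'_eq_ncard_basis' [Fintype α] (hI : M.IsBasis' I X) : M.rk' X = I.ncard := by
  have hub : ∀ n ∈ {n : ℕ | ∃ J, J ⊆ X ∧ M.Indep J ∧ n = Nat.card J}, n ≤ I.ncard := by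
    rintro n ⟨J, hJX, hJi, rfl⟩
    rw [Nat.card_coe_set_eq]
    exact ncard_le_ncard_basis' hJi hJX hI
  have hmem : I.ncard ∈ {n : ℕ | ∃ J, J ⊆ X ∧ M.Indep J ∧ n = Nat.card J} :=
    ⟨I, hI.subset, hI.indep, (Nat.card_coe_set_eq I).symm⟩
  exact le_antisymm (csSup_le ⟨_, hmem⟩ hub) (le_csSup ⟨I.ncard, hub⟩ hmem)

lemma rk'_restrict [Fintype α] (M : Matroid α) (R Z : Set α) :
    (M ↾ R).rk' Z = M.rk' (Z ∩ R) := by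
  unfold rk'
  congr 1
  ext n
  constructor
  · rintro ⟨I, hIZ, hIi, rfl⟩
    rw [restrict_indep_iff] at hIi
    exact ⟨I, subset_inter hIZ hIi.2, hIi.1, rfl⟩
  · rintro ⟨I, hIZR, hIi, rfl⟩
    exact ⟨I, hIZR.trans inter_subset_left,
      restrict_indep_iff.mpr ⟨hIi, hIZR.trans inter_subset_right⟩, rfl⟩

lemma rk'_empty [Fintype α] (M : Matroid α) : M.rk' ∅ = 0 := by
  have h : M.IsBasis' ∅ ∅ := ⟨⟨M.empty_indep, Subset.rfl⟩, fun A hA _ => hA.2⟩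
  rw [rk'_eq_ncard_basis' h, Set.ncard_empty]

lemma rk'_mono [Fintype α] (M : Matroid α) (h : X ⊆ Y) : M.rk' X ≤ M.rk' Y := by
  obtain ⟨I, hI⟩ := M.exists_isBasis' X
  obtain ⟨J, hJ⟩ := M.exists_isBasis' Y
  rw [rk'_eq_ncard_basis' hI, rk'_eq_ncard_basis' hJ]
  exact ncard_le_ncard_basis' hI.indep (hI.subset.trans h) hJ

lemma closure_eq_ground_of_rk'_eq [Fintype α] (M : Matroid α) (hC : C ⊆ M.E)
    (h : M.rk' C = M.rk' M.E) : M.closure C = M.E := by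
  obtain ⟨I, hI⟩ := M.exists_isBasis C hC
  obtain ⟨B, hB, hIB⟩ := hI.indep.subset_isBasis_of_subset (hI.subset.trans hC)
  have e1 : M.rk' C = I.ncard := rk'_eq_ncard_basis' hI.isBasis'
  have e2 : M.rk' M.E = B.ncard := rk'_eq_ncard_basis' hB.isBasis'
  have hIBeq : I = B := Set.eq_of_subset_of_ncard_le hIB (by omega) B.toFinite
  rw [← hI.closure_eq_closure, hIBeq, (isBasis_ground_iff.mp hB).closure_eq]

lemma rk'_dual [Fintype α] (M : Matroid α) (hZ : Z ⊆ M.E) :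
    M✶.rk' Z + M.rk' M.E = Z.ncard + M.rk' (M.E \ Z) := by
  obtain ⟨I, hI⟩ := M.exists_isBasis (M.E \ Z) diff_subset
  obtain ⟨B, hB, hIB⟩ := hI.exists_isBase
  rw [hIB] at hI
  have hdual := hB.compl_inter_isBasis_of_inter_isBasis hI
  rw [Set.diff_diff_cancel_left hZ] at hdual
  have e1 : M✶.rk' Z = ((M.E \ B) ∩ Z).ncard := rk'_eq_ncard_basis' hdual.isBasis'
  have e2 : M.rk' M.E = B.ncard := rk'_eq_ncard_basis' hB.isBasis_ground.isBasis'
  have e3 : M.rk' (M.E \ Z) = (B ∩ (M.E \ Z)).ncard := rk'_eq_ncard_basis' hI.isBasis'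
  have hBE : B ⊆ M.E := hB.subset_ground
  have s1 : (M.E \ B) ∩ Z = Z \ B := by
    rw [inter_comm, ← inter_diff_assoc, inter_eq_self_of_subset_left hZ]
  have s2 : B ∩ (M.E \ Z) = B \ Z := by
    rw [← inter_diff_assoc, inter_eq_self_of_subset_left hBE]
  rw [e1, e2, e3, s1, s2]
  have c1 : (Z \ B).ncard + (Z ∩ B).ncard = Z.ncard := by
    rw [← Set.ncard_union_eq (Set.disjoint_of_subset_right inter_subset_right
      disjoint_sdiff_left) (Z \ B).toFinite (Z ∩ B).toFinite, Set.diff_union_inter]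
  have c2 : (B \ Z).ncard + (B ∩ Z).ncard = B.ncard := by
    rw [← Set.ncard_union_eq (Set.disjoint_of_subset_right inter_subset_right
      disjoint_sdiff_left) (B \ Z).toFinite (B ∩ Z).toFinite, Set.diff_union_inter]
  rw [inter_comm Z B] at c1
  omega

lemma rk'_contract' [Fintype α] (M : Matroid α) (hC : C ⊆ M.E) (hD : D ⊆ M.E \ C) :
    (M.contract' C).rk' D + M.rk' C = M.rk' (D ∪ C) := by
  have h1 := rk'_dual (M✶ ↾ (M.E \ C)) (Z := D) (by simpa using hD)
  rw [rk'_restrict, rk'_restrict, restrict_ground_eq, inter_self,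
    inter_eq_self_of_subset_left (diff_subset (s := M.E \ C) (t := D))] at h1
  have h2 := rk'_dual M (Z := M.E \ C) diff_subset
  rw [Set.diff_diff_cancel_left hC] at h2
  have h3 := rk'_dual M (Z := (M.E \ C) \ D) (diff_subset.trans diff_subset)
  have s1 : M.E \ ((M.E \ C) \ D) = C ∪ D := by
    rw [diff_diff, Set.diff_diff_cancel_left (union_subset hC (hD.trans diff_subset))]
  rw [s1] at h3
  have c1 : ((M.E \ C) \ D).ncard + D.ncard = (M.E \ C).ncard := by
    rw [← Set.ncard_union_eq disjoint_sdiff_left ((M.E \ C) \ D).toFinite D.toFinite,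
      diff_union_of_subset hD]
  have hg : (M.contract' C).rk' D = (M✶ ↾ (M.E \ C))✶.rk' D := rfl
  rw [hg, union_comm]
  omega

lemma exists_base_contract'_subset [Fintype α] (M : Matroid α) (hC : C ⊆ M.E)
    (hB : M.IsBase B) : ∃ J, (M.contract' C).IsBase J ∧ J ⊆ B \ C := by
  have hind : M✶.Indep ((M.E \ C) \ B) :=
    hB.compl_isBase_dual.indep.subset (diff_subset_diff_left diff_subset)
  obtain ⟨K, hK, hsub⟩ := hind.subset_isBasis'_of_subset (diff_subset (s := M.E \ C) (t := B))
  refine ⟨(M.E \ C) \ K, ?_, ?_⟩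
  · rw [contract'_eq, dual_isBase_iff (by simpa using diff_subset (s := M.E \ C) (t := K))]
    have : (M✶ ↾ (M.E \ C)).E \ ((M.E \ C) \ K) = K := by
      rw [restrict_ground_eq, Set.diff_diff_cancel_left hK.subset]
    rw [this, isBase_restrict_iff']
    exact hK
  · intro x hx
    have hxB : x ∈ B := by
      by_contra hxB
      exact hx.2 (hsub ⟨hx.1, hxB⟩)
    exact ⟨hxB, hx.1.2⟩

theorem strength_le [Fintype α] (M : Matroid α)
    (hX : X ⊆ M.E) (hcl : M.closure (M.E \ X) ≠ M.E) :
    M.strength ≤ (M.contract' (M.E \ X)).strength := by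
  set C : Set α := M.E \ X with hC
  set N := M.contract' C with hN
  have hCE : C ⊆ M.E := diff_subset
  have hNE : N.E = X := by rw [hN, contract'_ground, hC, Set.diff_diff_cancel_left hX]
  have hrkC : M.rk' C < M.rk' M.E :=
    lt_of_le_of_ne (rk'_mono M hCE) fun h => hcl (closure_eq_ground_of_rk'_eq M hCE h)
  have hXEC : X ⊆ M.E \ C := by rw [hC, Set.diff_diff_cancel_left hX]
  have hNtop : N.rk' N.E + M.rk' C = M.rk' M.E := by
    rw [hNE]
    have := rk'_contract' M hCE hXEC
    rwa [union_diff_cancel hX] at this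
  have hkey : ∀ Y ⊆ N.E, N.rk' (N.E \ Y) + M.rk' C = M.rk' (M.E \ Y) := by
    intro Y hY
    have hD : N.E \ Y ⊆ M.E \ C := by rw [hNE]; exact (diff_subset).trans hXEC
    have h1 := rk'_contract' M hCE hD
    have hset : (N.E \ Y) ∪ C = M.E \ Y := by
      rw [hNE, hC]
      ext x
      simp only [mem_union, mem_diff]
      constructor
      · rintro (⟨hxX, hxY⟩ | ⟨hxE, hxX⟩)
        · exact ⟨hX hxX, hxY⟩
        · exact ⟨hxE, fun hxY => hxX (hNE ▸ hY hxY)⟩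
      · rintro ⟨hxE, hxY⟩
        by_cases hxX : x ∈ X
        · exact Or.inl ⟨hxX, hxY⟩
        · exact Or.inr ⟨hxE, hxX⟩
    rwa [hset] at h1
  apply csInf_le_csInf
  · refine ⟨0, ?_⟩
    rintro s ⟨Y, hY, hlt, rfl⟩
    have : (0 : ℝ) < (M.rk' M.E : ℝ) - (M.rk' (M.E \ Y) : ℝ) := by
      rw [sub_pos]; exact_mod_cast hlt
    positivity
  · refine ⟨_, N.E, Subset.rfl, ?_, rfl⟩
    rw [diff_self, rk'_empty]
    omega
  · rintro s ⟨Y, hY, hlt, rfl⟩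
    have h1 := hkey Y hY
    refine ⟨Y, (hY.trans_eq hNE).trans hX, by omega, ?_⟩
    congr 1
    have : ((M.rk' M.E : ℝ) - (M.rk' (M.E \ Y) : ℝ))
        = ((N.rk' N.E : ℝ) - (N.rk' (N.E \ Y) : ℝ)) := by
      rw [← hNtop, ← h1]
      push_cast
      ring
    rw [this]

theorem packing_le [Fintype α] (M : Matroid α) (hC : C ⊆ M.E)
    (hrkN : 0 < (M.contract' C).rk' (M.contract' C).E) :
    M.packingValue ≤ (M.contract' C).packingValue := by
  classical
  set N := M.contract' C with hN
  apply csSup_le_csSup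
  · refine ⟨(Fintype.card α : ℝ), ?_⟩
    rintro t ⟨lam, h0, hb, hcon, rfl⟩
    have step1 : ∀ B : Set α, lam B ≤ ∑ e ∈ N.E.toFinset, (if e ∈ B then lam B else 0) := by
      intro B
      by_cases hB : N.IsBase B
      · have hBne : B.Nonempty := by
          rcases B.eq_empty_or_nonempty with h | h
          · exfalso
            have : N.rk' N.E = B.ncard := rk'_eq_ncard_basis' hB.isBasis_ground.isBasis'
            rw [h, Set.ncard_empty] at this
            omega
          · exact h
        obtain ⟨e0, he0⟩ := hBne
        have he0E : e0 ∈ N.E.toFinset := by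
          rw [Set.mem_toFinset]; exact hB.subset_ground he0
        have := Finset.single_le_sum (f := fun e => if e ∈ B then lam B else 0)
          (fun e _ => by split_ifs <;> simp [h0 B]) he0E
        simpa [he0] using this
      · rw [hb B hB]
        exact Finset.sum_nonneg fun e _ => by split_ifs <;> simp [h0 B]
    calc ∑ B : Set α, lam B ≤ ∑ B : Set α, ∑ e ∈ N.E.toFinset, (if e ∈ B then lam B else 0) :=
          Finset.sum_le_sum fun B _ => step1 B
      _ = ∑ e ∈ N.E.toFinset, ∑ B : Set α, (if e ∈ B then lam B else 0) := Finset.sum_comm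
      _ ≤ ∑ e ∈ N.E.toFinset, 1 := by
          refine Finset.sum_le_sum fun e he => ?_
          have := hcon e (by rwa [Set.mem_toFinset] at he)
          simpa [Set.indicator_apply] using this
      _ = (N.E.toFinset.card : ℝ) := by simp
      _ ≤ (Fintype.card α : ℝ) := by exact_mod_cast Finset.card_le_univ _
  · exact ⟨0, fun _ => 0, fun _ => le_refl 0, fun _ _ => rfl, by simp, by simp⟩
  · rintro t ⟨lam, h0, hb, hcon, rfl⟩
    have hch : ∀ B : Set α, ∃ J : Set α, M.IsBase B → N.IsBase J ∧ J ⊆ B \ C := by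
      intro B
      by_cases hB : M.IsBase B
      · obtain ⟨J, hJ⟩ := exists_base_contract'_subset M hC hB
        exact ⟨J, fun _ => hJ⟩
      · exact ⟨∅, fun h => absurd h hB⟩
    choose f hf using hch
    set lam' : Set α → ℝ := fun J =>
      ∑ B ∈ Finset.univ.filter (fun B => M.IsBase B ∧ f B = J), lam B with hlam'
    have hfib : ∀ (F : Set α → ℝ),
        (∑ J : Set α, ∑ B ∈ Finset.univ.filter (fun B => M.IsBase B ∧ f B = J), F B)
        = ∑ B ∈ Finset.univ.filter (fun B => M.IsBase B), F B := by
      intro F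
      have : ∀ J : Set α, Finset.univ.filter (fun B => M.IsBase B ∧ f B = J)
          = (Finset.univ.filter (fun B => M.IsBase B)).filter (fun B => f B = J) := by
        intro J; rw [Finset.filter_filter]
      simp_rw [this]
      exact Finset.sum_fiberwise_of_maps_to (fun B _ => Finset.mem_univ _) F
    refine ⟨lam', ?_, ?_, ?_, ?_⟩
    · intro J
      exact Finset.sum_nonneg fun B _ => h0 B
    · intro J hJ
      refine Finset.sum_eq_zero fun B hB => ?_
      rw [Finset.mem_filter] at hB
      exact absurd (hB.2.2 ▸ (hf B hB.2.1).1) hJ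
    · intro e heN
      have heM : e ∈ M.E := ((contract'_ground M C) ▸ heN).1
      have e1 : (∑ J : Set α, J.indicator (fun _ ↦ lam' J) e)
          = ∑ J : Set α, ∑ B ∈ Finset.univ.filter (fun B => M.IsBase B ∧ f B = J),
              (if e ∈ f B then lam B else 0) := by
        refine Finset.sum_congr rfl fun J _ => ?_
        rw [Set.indicator_apply]
        by_cases heJ : e ∈ J
        · rw [if_pos heJ, hlam']
          refine Finset.sum_congr rfl fun B hB => ?_
          rw [Finset.mem_filter] at hB
          rw [hB.2.2, if_pos heJ]
        · rw [if_neg heJ]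
          refine (Finset.sum_eq_zero fun B hB => ?_).symm
          rw [Finset.mem_filter] at hB
          rw [hB.2.2, if_neg heJ]
      rw [e1, hfib]
      have e2 : (∑ B ∈ Finset.univ.filter (fun B => M.IsBase B), (if e ∈ f B then lam B else 0))
          ≤ ∑ B ∈ Finset.univ.filter (fun B => M.IsBase B), (if e ∈ B then lam B else 0) := by
        refine Finset.sum_le_sum fun B hB => ?_
        rw [Finset.mem_filter] at hB
        by_cases hef : e ∈ f B
        · rw [if_pos hef, if_pos (((hf B hB.2).2 hef).1)]
        · rw [if_neg hef]; split_ifs <;> simp [h0 B]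
      refine (e2.trans ?_)
      have e3 : (∑ B ∈ Finset.univ.filter (fun B => M.IsBase B), (if e ∈ B then lam B else 0))
          ≤ ∑ B : Set α, (if e ∈ B then lam B else 0) := by
        refine Finset.sum_le_sum_of_subset_of_nonneg (Finset.filter_subset _ _)
          fun B _ _ => by split_ifs <;> simp [h0 B]
      refine e3.trans ?_
      have := hcon e heM
      simpa [Set.indicator_apply] using this
    · rw [hfib lam]
      rw [Finset.sum_filter]
      refine (Finset.sum_congr rfl fun B _ => ?_)
      by_cases hB : M.IsBase B
      · rw [if_pos hB]
      · rw [if_neg hB, hb B hB]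

end Matroid

/-- If `cl(E−X) ≠ E`, then `S(M) ≤ S(M/(E−X))` and `τ(M) ≤ τ(M/(E−X))`. -/
theorem strength_and_packing_le_contract {α : Type*} [Fintype α]
    (M : Matroid α) (hne : M.E.Nonempty)
    (hloop : M.Loopless') (hrk : 0 < M.rk' M.E)
    (X : Set α) (hX : X ⊆ M.E) (hcl : M.closure (M.E \ X) ≠ M.E) :
    M.strength ≤ (M.contract' (M.E \ X)).strength ∧
    M.packingValue ≤ (M.contract' (M.E \ X)).packingValue := by
  have hCE : M.E \ X ⊆ M.E := diff_subset
  have hrkC : M.rk' (M.E \ X) < M.rk' M.E :=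
    lt_of_le_of_ne (M.rk'_mono hCE) fun h => hcl (M.closure_eq_ground_of_rk'_eq hCE h)
  have hNtop : (M.contract' (M.E \ X)).rk' (M.contract' (M.E \ X)).E + M.rk' (M.E \ X)
      = M.rk' M.E := by
    rw [contract'_ground, Set.diff_diff_cancel_left hX]
    have := M.rk'_contract' hCE (by rw [Set.diff_diff_cancel_left hX])
    rwa [union_diff_cancel hX] at this
  exact ⟨M.strength_le hX hcl, M.packing_le hCE (by omega)⟩
end
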